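/- arXiv:0801.0023 — 9 statements merged into one kernel-verified Lean document; each statement's English description precedes it below -/
import Mathlib

section
/- Let k ≥ 0 be a real number and let a : ℕ → ℂ satisfy a(0) = 0 and |a(n)| ≤ C·n^k for some constant C > 0 and all n ≥ 1, so that F(z) = Σ_{n≥1} a(n) z^n converges for |z| < 1. Then for every s ∈ ℂ with Re s > k + 1: (i) the function z ↦ (−log z)^{s−1} · F(z) / z is Lebesgue integrable on (0,1), and (ii) (1/Γ(s)) · ∫_0^1 (−log z)^{s−1} · F(z) · z^{−1} dz = Σ_{n≥1} a(n) / n^s, where n^s = exp(s · log n). -/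
open MeasureTheory

open Real Complex Set Filter in
private lemma integrable_tsum_of_norm {α : Type*} [MeasurableSpace α] {μ : Measure α}
    {f : ℕ → α → ℂ} (hf : ∀ i, Integrable (f i) μ)
    (h : Summable fun i => ∫ a, ‖f i a‖ ∂μ) :
    Integrable (fun a => ∑' i, f i a) μ := by
  have key : ∑' i, ∫⁻ a, ‖f i a‖₊ ∂μ ≠ ⊤ := by
    have heq : ∀ i : ℕ, ∫⁻ (a : α), ‖f i a‖₊ ∂μ = (‖(∫ a : α, ‖f i a‖ ∂μ)‖₊ : ENNReal) := by
      intro i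
      rw [lintegral_coe_eq_integral (fun a => ‖f i a‖₊) (hf i).norm, ENNReal.coe_nnreal_eq,
        coe_nnnorm, Real.norm_of_nonneg (integral_nonneg (fun a ↦ norm_nonneg (f i a)))]
      simp only [coe_nnnorm]
    rw [funext heq, ← ENNReal.coe_tsum]
    · exact ENNReal.coe_ne_top
    · simp_rw [← NNReal.summable_coe, coe_nnnorm]
      exact h.abs
  have hmeas : ∀ i, AEMeasurable (fun x => (‖f i x‖₊ : ENNReal)) μ :=
    fun i => (hf i).1.aemeasurable.nnnorm.coe_nnreal_ennreal
  have hae : ∀ᵐ a ∂μ, Summable fun i => (‖f i a‖₊ : ℝ) := by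
    rw [← lintegral_tsum hmeas] at key
    refine (ae_lt_top' (AEMeasurable.ennreal_tsum hmeas) key).mono fun x hx => ?_
    rw [← ENNReal.tsum_coe_ne_top_iff_summable_coe]
    exact hx.ne
  constructor
  · refine aestronglyMeasurable_of_tendsto_ae atTop
      (f := fun N a => ∑ i ∈ Finset.range N, f i a)
      (fun N => Finset.aestronglyMeasurable_fun_sum _ (fun i _ => (hf i).1))
      (hae.mono fun x hx => ?_)
    have hx' : Summable fun i => f i x := by
      apply Summable.of_norm
      simpa only [coe_nnnorm] using hx
    exact hx'.hasSum.tendsto_sum_nat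
  · show ∫⁻ a, ‖∑' i, f i a‖₊ ∂μ < ⊤
    calc ∫⁻ a, ‖∑' i, f i a‖₊ ∂μ
        ≤ ∫⁻ a, ∑' i, (‖f i a‖₊ : ENNReal) ∂μ := by
          refine lintegral_mono_ae (hae.mono fun a ha => ?_)
          have hsa : Summable fun i => ‖f i a‖₊ := NNReal.summable_coe.mp (by simpa using ha)
          calc (‖∑' i, f i a‖₊ : ENNReal) ≤ ((∑' i, ‖f i a‖₊ : NNReal) : ENNReal) :=
                ENNReal.coe_le_coe.mpr (nnnorm_tsum_le hsa)
            _ = ∑' i, (‖f i a‖₊ : ENNReal) := ENNReal.coe_tsum hsa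
      _ = ∑' i, ∫⁻ a, ‖f i a‖₊ ∂μ := lintegral_tsum hmeas
      _ < ⊤ := lt_top_iff_ne_top.mpr key

open Real Complex Set Filter in
private lemma Gint {s : ℂ} (hs : 0 < s.re) {p : ℝ} (hp : 0 < p) (c : ℂ) :
    IntegrableOn (fun t : ℝ => (t : ℂ) ^ (s - 1) * (c * (rexp (-p * t) : ℝ))) (Set.Ioi 0) := by
  simp_rw [← mul_assoc, mul_comm _ c, mul_assoc]
  have := Complex.GammaIntegral_convergent hs
  rw [← mul_zero p, ← integrableOn_Ioi_comp_mul_left_iff _ _ hp] at this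
  refine (IntegrableOn.congr_fun (this.const_mul (1 / (p : ℂ) ^ (s - 1)))
    (fun t (ht : 0 < t) ↦ ?_) measurableSet_Ioi).const_mul _
  simp_rw [mul_comm (↑(rexp _) : ℂ), ← mul_assoc, neg_mul, ofReal_mul]
  rw [mul_cpow_ofReal_nonneg hp.le ht.le, ← mul_assoc, one_div, inv_mul_cancel₀, one_mul]
  rw [Ne, cpow_eq_zero_iff, not_and_or]
  exact Or.inl (ofReal_ne_zero.mpr hp.ne')

open Real Complex Set Filter in
theorem stmt_2 (k : ℝ) (hk : 0 ≤ k) (a : ℕ → ℂ) (ha0 : a 0 = 0)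
    (C : ℝ) (hC : 0 < C) (ha : ∀ n : ℕ, 1 ≤ n → ‖a n‖ ≤ C * (n : ℝ) ^ k)
    (F : ℝ → ℂ) (hF : ∀ z : ℝ, F z = ∑' n : ℕ, a n * (z : ℂ) ^ n)
    (s : ℂ) (hs : k + 1 < s.re) :
    IntegrableOn (fun z : ℝ => ((-Real.log z : ℝ) : ℂ) ^ (s - 1) * F z * (z : ℂ)⁻¹)
      (Set.Ioo 0 1) ∧
    (1 / Complex.Gamma s) *
      ∫ z in Set.Ioo (0:ℝ) 1, ((-Real.log z : ℝ) : ℂ) ^ (s - 1) * F z * (z : ℂ)⁻¹ =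
    ∑' n : ℕ, a n / (n : ℂ) ^ s := by
  have hσ : 0 < s.re := by linarith
  set f : ℝ → ℂ := fun z : ℝ => ((-Real.log z : ℝ) : ℂ) ^ (s - 1) * F z * (z : ℂ)⁻¹ with hf_def
  set FF : ℝ → ℂ := fun t => F (rexp (-t)) with hFF_def
  -- substitution data
  have himg : (rexp ∘ Neg.neg) '' Set.Ioi 0 = Set.Ioo (0:ℝ) 1 := by
    ext x
    simp only [Set.mem_image, Function.comp, Set.mem_Ioi, Set.mem_Ioo]
    constructor
    · rintro ⟨t, ht, rfl⟩
      exact ⟨Real.exp_pos _, Real.exp_lt_one_iff.mpr (by linarith)⟩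
    · rintro ⟨hx0, hx1⟩
      exact ⟨-Real.log x, by simpa using Real.log_neg hx0 hx1,
        by simp [Real.exp_log hx0]⟩
  have hderiv : ∀ x ∈ Set.Ioi (0:ℝ),
      HasDerivWithinAt (rexp ∘ Neg.neg) (-rexp (-x)) (Set.Ioi 0) x := fun x _ =>
    mul_neg_one (rexp (-x)) ▸
      ((Real.hasDerivAt_exp (-x)).comp x (hasDerivAt_neg x)).hasDerivWithinAt
  have hinj : Set.InjOn (rexp ∘ Neg.neg) (Set.Ioi 0) :=
    (Real.exp_injective.comp neg_injective).injOn
  have hsimp : ∀ t : ℝ, |(-rexp (-t))| • f ((rexp ∘ Neg.neg) t) = (t : ℂ) ^ (s - 1) * FF t := by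
    intro t
    have he : (0:ℝ) < rexp (-t) := Real.exp_pos _
    have hne : ((rexp (-t) : ℝ) : ℂ) ≠ 0 := Complex.ofReal_ne_zero.mpr he.ne'
    simp only [f, FF, Function.comp, abs_neg, abs_of_pos he, Real.log_exp, neg_neg]
    rw [Complex.real_smul]
    field_simp
  -- the terms
  set G : ℕ → ℝ → ℂ := fun n t => (t : ℂ) ^ (s - 1) * (a n * (rexp (-(n : ℝ) * t) : ℝ))
    with hG_def
  -- HasSum hypothesis
  have hterm : ∀ (t : ℝ) (n : ℕ),
      a n * ((rexp (-t) : ℝ) : ℂ) ^ n = a n * ((rexp (-(n : ℝ) * t) : ℝ) : ℂ) := by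
    intro t n
    congr 1
    rw [← Complex.ofReal_pow]
    congr 1
    rw [← Real.exp_nat_mul]
    ring_nf
  have hsummable : ∀ t : ℝ, 0 < t → Summable (fun n => a n * ((rexp (-t) : ℝ) : ℂ) ^ n) := by
    intro t ht
    set K : ℕ := ⌈k⌉₊ with hK
    have hr : ‖rexp (-t)‖ < 1 := by
      rw [Real.norm_eq_abs, abs_of_pos (Real.exp_pos _)]
      exact Real.exp_lt_one_iff.mpr (by linarith)
    apply Summable.of_norm
    have hgeo : Summable (fun n : ℕ => C * ((n : ℝ) ^ K * rexp (-t) ^ n)) :=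
      (summable_pow_mul_geometric_of_norm_lt_one K hr).mul_left C
    refine hgeo.of_nonneg_of_le (fun n => norm_nonneg _) (fun n => ?_)
    rw [norm_mul, norm_pow, Complex.norm_real, Real.norm_eq_abs,
      abs_of_pos (Real.exp_pos _)]
    rcases Nat.eq_zero_or_pos n with rfl | hn
    · simp [ha0]
      positivity
    · have h1 : ‖a n‖ ≤ C * (n : ℝ) ^ k := ha n hn
      have h2 : (n : ℝ) ^ k ≤ (n : ℝ) ^ K := by
        rw [← Real.rpow_natCast (n : ℝ) K]
        exact Real.rpow_le_rpow_of_exponent_le (by exact_mod_cast hn) (Nat.le_ceil k)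
      have h3 : (0:ℝ) < rexp (-t) ^ n := pow_pos (Real.exp_pos _) n
      calc ‖a n‖ * rexp (-t) ^ n ≤ (C * (n : ℝ) ^ k) * rexp (-t) ^ n := by
            exact mul_le_mul_of_nonneg_right h1 h3.le
        _ ≤ C * ((n : ℝ) ^ K * rexp (-t) ^ n) := by
            rw [mul_assoc]
            exact mul_le_mul_of_nonneg_left (mul_le_mul_of_nonneg_right h2 h3.le) hC.le
  have hFsum : ∀ t ∈ Set.Ioi (0:ℝ),
      HasSum (fun n : ℕ => a n * ((rexp (-(n : ℝ) * t) : ℝ) : ℂ)) (FF t) := by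
    intro t ht
    have h1 := (hsummable t ht).hasSum
    rw [show FF t = ∑' n : ℕ, a n * ((rexp (-t) : ℝ) : ℂ) ^ n from hF _]
    exact (funext (hterm t) : _ = _) ▸ h1
  -- summability of coefficients
  have h_sum : Summable fun n : ℕ => ‖a n‖ / (n : ℝ) ^ s.re := by
    have hsum2 : Summable fun n : ℕ => C * (n : ℝ) ^ (k - s.re) :=
      (Real.summable_nat_rpow.mpr (by linarith)).mul_left C
    refine hsum2.of_nonneg_of_le (fun n => by positivity) (fun n => ?_)
    rcases Nat.eq_zero_or_pos n with rfl | hn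
    · simp [ha0]
      positivity
    · have hn1 : (1:ℝ) ≤ (n : ℝ) := by exact_mod_cast hn
      rw [div_le_iff₀ (Real.rpow_pos_of_pos (by linarith) _), Real.rpow_sub (by linarith),
        mul_assoc, div_mul_cancel₀ _ (Real.rpow_pos_of_pos (by linarith) s.re).ne']
      exact ha n hn
  have hp : ∀ n : ℕ, a n = 0 ∨ 0 < ((n : ℝ)) := by
    intro n
    rcases Nat.eq_zero_or_pos n with rfl | hn
    · exact Or.inl ha0
    · exact Or.inr (by exact_mod_cast hn)
  have hmel : HasSum (fun n : ℕ => Complex.Gamma s * a n / ((n : ℝ) : ℂ) ^ s) (mellin FF s) :=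
    hasSum_mellin hp hσ hFsum h_sum
  -- per-term integrability
  have hGint : ∀ n : ℕ, IntegrableOn (G n) (Set.Ioi 0) := by
    intro n
    rcases Nat.eq_zero_or_pos n with rfl | hn
    · simpa [G, ha0] using (integrable_zero _ _ (volume.restrict (Set.Ioi (0:ℝ))))
    · exact Gint hσ (by exact_mod_cast hn : (0:ℝ) < (n:ℝ)) (a n)
  -- norms of integrals
  have hGnorm : ∀ n : ℕ, ∫ t in Set.Ioi (0:ℝ), ‖G n t‖ =
      Real.Gamma s.re * (‖a n‖ / (n : ℝ) ^ s.re) := by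
    intro n
    rcases Nat.eq_zero_or_pos n with rfl | hn
    · simp [G, ha0]
    · have hn' : (0:ℝ) < (n : ℝ) := by exact_mod_cast hn
      have heq : ∀ t ∈ Set.Ioi (0:ℝ),
          ‖G n t‖ = ‖a n‖ * (t ^ (s.re - 1) * rexp (-(n : ℝ) * t)) := by
        intro t ht
        rw [hG_def]
        simp only [norm_mul, Complex.norm_real, Real.norm_eq_abs, Real.abs_exp,
          Complex.norm_cpow_eq_rpow_re_of_pos ht, Complex.sub_re, Complex.one_re]
        ring
      rw [setIntegral_congr_fun measurableSet_Ioi heq, integral_const_mul]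
      have := Real.integral_rpow_mul_exp_neg_mul_Ioi hσ hn'
      simp_rw [← neg_mul ((n:ℝ))] at this
      rw [this, one_div, Real.inv_rpow hn'.le]
      field_simp
  have hGnormsum : Summable fun n : ℕ => ∫ t in Set.Ioi (0:ℝ), ‖G n t‖ := by
    simp_rw [hGnorm]
    exact h_sum.mul_left _
  -- integrability of the sum
  have hIoi : IntegrableOn (fun t => ∑' n, G n t) (Set.Ioi (0:ℝ)) :=
    integrable_tsum_of_norm hGint hGnormsum
  have hGsum : ∀ t ∈ Set.Ioi (0:ℝ), ∑' n, G n t = (t : ℂ) ^ (s - 1) * FF t := by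
    intro t ht
    rw [hG_def]
    simp only []
    rw [show (t : ℂ) ^ (s - 1) * FF t
        = (t : ℂ) ^ (s - 1) * ∑' n : ℕ, a n * ((rexp (-(n : ℝ) * t) : ℝ) : ℂ) from by
      rw [(hFsum t ht).tsum_eq]]
    exact tsum_mul_left
  have hint : IntegrableOn f (Set.Ioo (0:ℝ) 1) := by
    rw [← himg, integrableOn_image_iff_integrableOn_abs_deriv_smul
      measurableSet_Ioi hderiv hinj]
    refine IntegrableOn.congr_fun hIoi (fun t ht => ?_) measurableSet_Ioi
    rw [hGsum t ht, ← hsimp t]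
  refine ⟨hint, ?_⟩
  have hval : ∫ z in Set.Ioo (0:ℝ) 1, f z = mellin FF s := by
    rw [← himg, integral_image_eq_integral_abs_deriv_smul measurableSet_Ioi hderiv hinj,
      mellin]
    refine setIntegral_congr_fun measurableSet_Ioi (fun t ht => ?_)
    rw [hsimp t, smul_eq_mul]
  rw [hval, hmel.tsum_eq.symm]
  have hΓ : Complex.Gamma s ≠ 0 := Complex.Gamma_ne_zero_of_re_pos hσ
  have : ∀ n : ℕ, Complex.Gamma s * a n / ((n : ℝ) : ℂ) ^ s
      = Complex.Gamma s * (a n / ((n : ℕ) : ℂ) ^ s) := by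
    intro n
    rw [mul_div_assoc]
    norm_num
  rw [funext this, tsum_mul_left, ← mul_assoc, one_div, inv_mul_cancel₀ hΓ, one_mul]
end

section
/- Let k ≥ 0 be a real number and let a : ℕ → ℂ satisfy a(0) = 0 and |a(n)| ≤ C·n^k for some constant C > 0 and all n ≥ 1, and set F(z) = Σ_{n≥1} a(n) z^n for |z| < 1. Then for every REAL s with s > k + 1: (1/Γ(s)) · ∫_0^1 (−log z)^{s−1} · F(z) · z^{−1} dz = ∫_0^1 (Σ_{n≥1} a(n) · z^{n^s − 1}) dz, where n^s is the real power and z^{n^s−1} = exp((n^s − 1)·log z). -/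
open MeasureTheory Set

lemma img_exp_neg : (fun t : ℝ => Real.exp (-t)) '' Set.Ioi 0 = Set.Ioo 0 1 := by
  ext x
  constructor
  · rintro ⟨t, ht, rfl⟩
    exact ⟨Real.exp_pos _, by rw [Real.exp_lt_one_iff]; linarith [Set.mem_Ioi.mp ht]⟩
  · rintro ⟨hx0, hx1⟩
    exact ⟨-Real.log x, by simpa using Real.log_neg hx0 hx1, by simp [Real.exp_log hx0]⟩

lemma hderiv : ∀ x ∈ Set.Ioi (0:ℝ), HasDerivWithinAt (fun t : ℝ => Real.exp (-t))
    (-Real.exp (-x)) (Set.Ioi 0) x := by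
  intro x _
  simpa using ((hasDerivAt_neg x).exp).hasDerivWithinAt

lemma hinj : Set.InjOn (fun t : ℝ => Real.exp (-t)) (Set.Ioi 0) :=
  (Real.exp_injective.comp neg_injective).injOn

lemma subst_eq {E : Type*} [NormedAddCommGroup E] [NormedSpace ℝ E] (g : ℝ → E) :
    ∫ z in Set.Ioo (0:ℝ) 1, g z
      = ∫ t in Set.Ioi (0:ℝ), Real.exp (-t) • g (Real.exp (-t)) := by
  rw [← img_exp_neg, integral_image_eq_integral_abs_deriv_smul measurableSet_Ioi hderiv hinj g]
  refine setIntegral_congr_fun measurableSet_Ioi fun t _ => ?_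
  rw [abs_neg, abs_of_pos (Real.exp_pos _)]

lemma subst_integrable {E : Type*} [NormedAddCommGroup E] [NormedSpace ℝ E] (g : ℝ → E) :
    IntegrableOn g (Set.Ioo (0:ℝ) 1) ↔
      IntegrableOn (fun t => Real.exp (-t) • g (Real.exp (-t))) (Set.Ioi (0:ℝ)) := by
  rw [← img_exp_neg,
    integrableOn_image_iff_integrableOn_abs_deriv_smul measurableSet_Ioi hderiv hinj g]
  constructor <;> intro h <;> refine h.congr_fun (fun t _ => ?_) measurableSet_Ioi
  · beta_reduce; rw [abs_neg, abs_of_pos (Real.exp_pos _)]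
  · rw [abs_neg, abs_of_pos (Real.exp_pos _)]

lemma gamma_eval {c s : ℝ} (hc : 0 < c) (hs : 0 < s) :
    ∫ z in Set.Ioo (0:ℝ) 1, (-Real.log z) ^ (s-1) * z ^ (c-1)
      = (1/c) ^ s * Real.Gamma s := by
  rw [subst_eq]
  rw [← Real.integral_rpow_mul_exp_neg_mul_Ioi hs hc]
  refine setIntegral_congr_fun measurableSet_Ioi fun t ht => ?_
  have h1 : Real.exp (-t) ^ (c - 1) = Real.exp (-t * (c-1)) := by
    rw [Real.rpow_def_of_pos (Real.exp_pos _), Real.log_exp]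
  rw [smul_eq_mul, Real.log_exp, neg_neg, h1]
  rw [mul_comm (Real.exp (-t)) _, mul_assoc, ← Real.exp_add]
  ring_nf

lemma gamma_integrable {c s : ℝ} (hc : 0 < c) (hs : 0 < s) :
    IntegrableOn (fun z => (-Real.log z) ^ (s-1) * z ^ (c-1)) (Set.Ioo (0:ℝ) 1) := by
  rw [subst_integrable]
  have h := integrableOn_rpow_mul_exp_neg_mul_rpow (by linarith : (-1:ℝ) < s - 1)
    one_pos hc
  refine h.congr_fun (fun t ht => ?_) measurableSet_Ioi
  have h1 : Real.exp (-t) ^ (c - 1) = Real.exp (-t * (c-1)) := by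
    rw [Real.rpow_def_of_pos (Real.exp_pos _), Real.log_exp]
  beta_reduce; rw [smul_eq_mul, Real.log_exp, neg_neg, h1, Real.rpow_one]
  rw [mul_comm (Real.exp (-t)) _, mul_assoc, ← Real.exp_add]
  ring_nf

lemma rpow_eval {c : ℝ} (hc : 0 < c) :
    ∫ z in Set.Ioo (0:ℝ) 1, z ^ (c-1) = 1/c := by
  rw [← integral_Ioc_eq_integral_Ioo, ← intervalIntegral.integral_of_le zero_le_one,
    integral_rpow (Or.inl (by linarith))]
  rw [sub_add_cancel, Real.one_rpow, Real.zero_rpow hc.ne', sub_zero]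

lemma rpow_integrable {c : ℝ} (hc : 0 < c) :
    IntegrableOn (fun z : ℝ => z ^ (c-1)) (Set.Ioo (0:ℝ) 1) := by
  have := intervalIntegral.intervalIntegrable_rpow' (r := c - 1) (a := 0) (b := 1) (by linarith)
  rw [intervalIntegrable_iff_integrableOn_Ioo_of_le zero_le_one] at this
  exact this

-- per-term lemmas, f-side (Gamma side)
lemma fterm_int (c : ℂ) {r s : ℝ} (hr : 0 < r) (hs : 0 < s) :
    ∫ z in Set.Ioo (0:ℝ) 1, c * ((((-Real.log z) ^ (s-1) * z ^ (r-1)) : ℝ) : ℂ)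
      = c * ((((1/r) ^ s * Real.Gamma s : ℝ)) : ℂ) := by
  rw [integral_const_mul]
  congr 1
  rw [← gamma_eval hr hs]
  exact integral_ofReal

lemma fterm_integrable (c : ℂ) {r s : ℝ} (hr : 0 < r) (hs : 0 < s) :
    IntegrableOn (fun z => c * ((((-Real.log z) ^ (s-1) * z ^ (r-1)) : ℝ) : ℂ))
      (Set.Ioo (0:ℝ) 1) :=
  ((gamma_integrable hr hs).ofReal (𝕜 := ℂ)).const_mul c

lemma fterm_norm (c : ℂ) {r s : ℝ} (hr : 0 < r) (hs : 0 < s) :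
    ∫ z in Set.Ioo (0:ℝ) 1, ‖c * ((((-Real.log z) ^ (s-1) * z ^ (r-1)) : ℝ) : ℂ)‖
      = ‖c‖ * ((1/r) ^ s * Real.Gamma s) := by
  rw [← gamma_eval hr hs, ← integral_const_mul]
  refine setIntegral_congr_fun measurableSet_Ioo fun z hz => ?_
  rw [norm_mul, Complex.norm_real, Real.norm_eq_abs, abs_of_nonneg]
  exact mul_nonneg (Real.rpow_nonneg
    (neg_nonneg.2 (Real.log_nonpos hz.1.le hz.2.le)) _) (Real.rpow_nonneg hz.1.le _)

-- per-term lemmas, g-side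
lemma gterm_int (c : ℂ) {r : ℝ} (hr : 0 < r) :
    ∫ z in Set.Ioo (0:ℝ) 1, c * (((z ^ (r-1)) : ℝ) : ℂ) = c * (((1/r : ℝ)) : ℂ) := by
  rw [integral_const_mul]
  congr 1
  rw [← rpow_eval hr]
  exact integral_ofReal

lemma gterm_integrable (c : ℂ) {r : ℝ} (hr : 0 < r) :
    IntegrableOn (fun z : ℝ => c * (((z ^ (r-1)) : ℝ) : ℂ)) (Set.Ioo (0:ℝ) 1) :=
  ((rpow_integrable hr).ofReal (𝕜 := ℂ)).const_mul c

lemma gterm_norm (c : ℂ) {r : ℝ} (hr : 0 < r) :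
    ∫ z in Set.Ioo (0:ℝ) 1, ‖c * (((z ^ (r-1)) : ℝ) : ℂ)‖ = ‖c‖ * (1/r) := by
  rw [← rpow_eval hr, ← integral_const_mul]
  refine setIntegral_congr_fun measurableSet_Ioo fun z hz => ?_
  rw [norm_mul, Complex.norm_real, Real.norm_eq_abs, abs_of_nonneg (Real.rpow_nonneg hz.1.le _)]

theorem stmt_4 (k : ℝ) (hk : 0 ≤ k) (a : ℕ → ℂ) (ha0 : a 0 = 0)
    (C : ℝ) (hC : 0 < C) (ha : ∀ n : ℕ, 1 ≤ n → ‖a n‖ ≤ C * (n : ℝ) ^ k)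
    (F : ℝ → ℂ) (hF : ∀ z : ℝ, F z = ∑' n : ℕ, a n * (z : ℂ) ^ n)
    (s : ℝ) (hs : k + 1 < s) :
    (1 / Complex.Gamma (s : ℂ)) *
      ∫ z in Set.Ioo (0:ℝ) 1,
        ((-Real.log z : ℝ) : ℂ) ^ ((s : ℂ) - 1) * F z * (z : ℂ)⁻¹ =
    ∫ z in Set.Ioo (0:ℝ) 1, ∑' n : ℕ, a n * ((z ^ ((n : ℝ) ^ s - 1) : ℝ) : ℂ) := by
  have hs0 : 0 < s := by linarith
  have hΓR : 0 < Real.Gamma s := Real.Gamma_pos_of_pos hs0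
  have hsum_pow : Summable (fun n : ℕ => (C * Real.Gamma s) * (n : ℝ) ^ (k - s)) :=
    (Real.summable_nat_rpow.mpr (by linarith : k - s < -1)).mul_left _
  -- uniform norm bound used twice
  have hbound : ∀ n : ℕ, ‖a n‖ * (1/(n:ℝ)) ^ s ≤ C * (n:ℝ) ^ (k - s) := by
    intro n
    rcases Nat.eq_zero_or_pos n with rfl | hn
    · simp only [ha0, norm_zero, zero_mul]
      positivity
    · have hc : (0:ℝ) < n := by exact_mod_cast hn
      have h1 : (1/(n:ℝ)) ^ s = (n:ℝ) ^ (-s) := by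
        rw [one_div, Real.inv_rpow hc.le, ← Real.rpow_neg hc.le]
      have h2 : (n:ℝ) ^ (k - s) = (n:ℝ) ^ k * (n:ℝ) ^ (-s) := by
        rw [← Real.rpow_add hc]; ring_nf
      rw [h1, h2, ← mul_assoc]
      exact mul_le_mul_of_nonneg_right (ha n hn) (Real.rpow_nonneg hc.le _)
  -- LHS
  have hL : (∫ z in Set.Ioo (0:ℝ) 1,
        ((-Real.log z : ℝ) : ℂ) ^ ((s : ℂ) - 1) * F z * (z : ℂ)⁻¹)
      = ∑' n : ℕ, a n * ((((1/(n:ℝ)) ^ s * Real.Gamma s : ℝ)) : ℂ) := by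
    have hpt : ∀ z ∈ Set.Ioo (0:ℝ) 1,
        ((-Real.log z : ℝ) : ℂ) ^ ((s : ℂ) - 1) * F z * (z : ℂ)⁻¹
          = ∑' n : ℕ, a n * ((((-Real.log z) ^ (s-1) * z ^ ((n:ℝ)-1)) : ℝ) : ℂ) := by
      intro z hz
      have hlog : (0:ℝ) ≤ -Real.log z := neg_nonneg.2 (Real.log_nonpos hz.1.le hz.2.le)
      have hcast : ((s:ℂ) - 1) = ((s - 1 : ℝ) : ℂ) := by push_cast; ring
      rw [hF, hcast, ← Complex.ofReal_cpow hlog]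
      rw [← tsum_mul_left, ← tsum_mul_right]
      refine tsum_congr fun n => ?_
      rcases Nat.eq_zero_or_pos n with rfl | hn
      · simp [ha0]
      · have hzn : z ^ ((n:ℝ) - 1) = z ^ n * z⁻¹ := by
          rw [Real.rpow_sub hz.1, Real.rpow_natCast, Real.rpow_one, div_eq_mul_inv]
        rw [hzn]
        push_cast [Complex.ofReal_mul]
        ring
    rw [setIntegral_congr_fun measurableSet_Ioo hpt]
    rw [← integral_tsum_of_summable_integral_norm]
    · refine tsum_congr fun n => ?_
      rcases Nat.eq_zero_or_pos n with rfl | hn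
      · simp [ha0]
      · exact fterm_int (a n) (by exact_mod_cast hn) hs0
    · intro n
      rcases Nat.eq_zero_or_pos n with rfl | hn
      · simp only [ha0, zero_mul]; exact integrable_zero _ ℂ _
      · exact fterm_integrable (a n) (by exact_mod_cast hn : (0:ℝ) < n) hs0
    · refine Summable.of_nonneg_of_le
        (fun n => integral_nonneg fun z => norm_nonneg _) (fun n => ?_) hsum_pow
      rcases Nat.eq_zero_or_pos n with rfl | hn
      · simp only [ha0]
        have : ∀ z : ℝ, ‖(0:ℂ) * ((((-Real.log z) ^ (s-1) * z ^ ((0:ℕ):ℝ)-1) : ℝ) : ℂ)‖ = 0 := by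
          intro z; simp
        simp only [zero_mul, norm_zero, integral_zero]
        positivity
      · have hc : (0:ℝ) < n := by exact_mod_cast hn
        rw [fterm_norm (a n) hc hs0]
        calc ‖a n‖ * ((1/(n:ℝ)) ^ s * Real.Gamma s)
            = (‖a n‖ * (1/(n:ℝ)) ^ s) * Real.Gamma s := by ring
          _ ≤ (C * (n:ℝ) ^ (k - s)) * Real.Gamma s :=
              mul_le_mul_of_nonneg_right (hbound n) hΓR.le
          _ = (C * Real.Gamma s) * (n:ℝ) ^ (k - s) := by ring
  -- RHS
  have hR : (∫ z in Set.Ioo (0:ℝ) 1, ∑' n : ℕ, a n * ((z ^ ((n : ℝ) ^ s - 1) : ℝ) : ℂ))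
      = ∑' n : ℕ, a n * ((((1/(n:ℝ)) ^ s : ℝ)) : ℂ) := by
    rw [← integral_tsum_of_summable_integral_norm]
    · refine tsum_congr fun n => ?_
      rcases Nat.eq_zero_or_pos n with rfl | hn
      · simp [ha0]
      · have hc : (0:ℝ) < n := by exact_mod_cast hn
        have hcs : (0:ℝ) < (n:ℝ) ^ s := Real.rpow_pos_of_pos hc s
        have key : (1/((n:ℝ) ^ s) : ℝ) = (1/(n:ℝ)) ^ s := by
          rw [one_div, one_div, ← Real.inv_rpow hc.le]
        rw [gterm_int (a n) hcs, key]
    · intro n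
      rcases Nat.eq_zero_or_pos n with rfl | hn
      · simp only [ha0, zero_mul]; exact integrable_zero _ ℂ _
      · have hc : (0:ℝ) < n := by exact_mod_cast hn
        exact gterm_integrable (a n) (Real.rpow_pos_of_pos hc s)
    · refine Summable.of_nonneg_of_le
        (fun n => integral_nonneg fun z => norm_nonneg _) (fun n => ?_)
        ((Real.summable_nat_rpow.mpr (by linarith : k - s < -1)).mul_left C)
      rcases Nat.eq_zero_or_pos n with rfl | hn
      · simp only [ha0, zero_mul, norm_zero, integral_zero]
        positivity
      · have hc : (0:ℝ) < n := by exact_mod_cast hn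
        have hcs : (0:ℝ) < (n:ℝ) ^ s := Real.rpow_pos_of_pos hc s
        have key : (1/((n:ℝ) ^ s) : ℝ) = (1/(n:ℝ)) ^ s := by
          rw [one_div, one_div, ← Real.inv_rpow hc.le]
        rw [gterm_norm (a n) hcs, key]
        exact hbound n
  rw [hL, hR]
  have hΓC : Complex.Gamma (s : ℂ) = ((Real.Gamma s : ℝ) : ℂ) := Complex.Gamma_ofReal s
  have hΓne : ((Real.Gamma s : ℝ) : ℂ) ≠ 0 := by exact_mod_cast hΓR.ne'
  have : ∀ n : ℕ, a n * ((((1/(n:ℝ)) ^ s * Real.Gamma s : ℝ)) : ℂ)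
      = (a n * ((((1/(n:ℝ)) ^ s : ℝ)) : ℂ)) * ((Real.Gamma s : ℝ) : ℂ) := by
    intro n; push_cast; ring
  rw [tsum_congr this, tsum_mul_right, hΓC]
  rw [one_div, mul_comm]
  rw [mul_assoc, mul_inv_cancel₀ hΓne, mul_one]
end

section
/- Let r ≥ 0 be a real number and let a : ℕ → ℂ satisfy a(0) = 0 and |a(n)| ≤ C·n^r for some constant C > 0 and all n ≥ 1. Let k ≥ 1 be an integer, and define b : ℕ → ℂ by b(m) = a(n) if m = n^k for some n ≥ 1 and b(m) = 0 otherwise. Then: (i) |b(m)| ≤ C·m^{r/k} for all m ≥ 1; and (ii) for every s ∈ ℂ with Re s > r + k, (1/Γ(s)) · ∫_0^1 (−log z)^{s−1} · (Σ_{n≥1} a(n) z^n) · z^{−1} dz = (1/Γ(s/k)) · ∫_0^1 (−log z)^{s/k−1} · (Σ_{n≥1} a(n) z^{n^k}) · z^{−1} dz. -/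
open MeasureTheory Real Set

private lemma subst_exp (φ : ℝ → ℂ) :
    ∫ z in Set.Ioo (0:ℝ) 1, φ z
      = ∫ t in Set.Ioi (0:ℝ), Real.exp (-t) • φ (Real.exp (-t)) := by
  have himg : (fun t : ℝ => Real.exp (-t)) '' Set.Ioi 0 = Set.Ioo (0:ℝ) 1 := by
    ext z
    constructor
    · rintro ⟨t, ht, rfl⟩
      exact ⟨Real.exp_pos _, Real.exp_lt_one_iff.mpr (by simpa using ht)⟩
    · rintro ⟨h0, h1⟩
      refine ⟨-Real.log z, by simpa using Real.log_neg h0 h1, ?_⟩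
      show rexp (-(-Real.log z)) = z
      rw [neg_neg, Real.exp_log h0]
  have hder : ∀ x ∈ Set.Ioi (0:ℝ),
      HasDerivWithinAt (fun t : ℝ => rexp (-t)) (-rexp (-x)) (Set.Ioi 0) x := by
    intro x _
    have := ((Real.hasDerivAt_exp (-x)).comp x (hasDerivAt_neg x)).hasDerivWithinAt
      (s := Set.Ioi (0:ℝ))
    rw [mul_neg_one] at this
    exact this
  have hinj : Set.InjOn (fun t : ℝ => rexp (-t)) (Set.Ioi 0) :=
    (Real.exp_injective.comp neg_injective).injOn
  rw [← himg, integral_image_eq_integral_abs_deriv_smul measurableSet_Ioi hder hinj φ]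
  refine setIntegral_congr_fun measurableSet_Ioi fun t _ => ?_
  rw [abs_neg, abs_of_pos (Real.exp_pos _)]

private lemma key (r : ℝ) (hr : 0 ≤ r) (a : ℕ → ℂ) (ha0 : a 0 = 0) (C : ℝ) (hC : 0 ≤ C)
    (ha : ∀ n : ℕ, 1 ≤ n → ‖a n‖ ≤ C * (n : ℝ) ^ r)
    (k : ℕ) (hk : 1 ≤ k) (w : ℂ) (hw : 0 < w.re) (hσ : r + 1 < k * w.re) :
    (1 / Complex.Gamma w) *
      ∫ z in Set.Ioo (0:ℝ) 1,
        ((-Real.log z : ℝ) : ℂ) ^ (w - 1) * (∑' n : ℕ, a n * (z : ℂ) ^ (n ^ k)) * (z : ℂ)⁻¹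
    = ∑' n : ℕ, a n * (n : ℂ) ^ (-((k : ℂ) * w)) := by
  set F : ℝ → ℂ := fun t => ∑' n : ℕ, a n * (rexp (-((n ^ k : ℕ) : ℝ) * t) : ℂ) with hF_def
  -- summability of the series defining F, for t > 0
  have hsummF : ∀ t : ℝ, 0 < t →
      Summable fun n : ℕ => a n * (rexp (-((n ^ k : ℕ) : ℝ) * t) : ℂ) := by
    intro t ht
    apply Summable.of_norm
    have hgeom : Summable fun n : ℕ => C * ((n : ℝ) ^ (⌈r⌉₊) * rexp (-t) ^ n) := by
      refine Summable.mul_left C ?_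
      exact summable_pow_mul_geometric_of_norm_lt_one _
        (by rw [Real.norm_eq_abs, abs_of_pos (Real.exp_pos _)];
            exact Real.exp_lt_one_iff.mpr (by linarith))
    refine hgeom.of_nonneg_of_le (fun n => norm_nonneg _) (fun n => ?_)
    rcases Nat.eq_zero_or_pos n with rfl | hn
    · simp [ha0]; positivity
    · rw [norm_mul, Complex.norm_real, Real.norm_eq_abs, abs_of_pos (Real.exp_pos _)]
      have h1 : ‖a n‖ ≤ C * (n : ℝ) ^ r := ha n hn
      have h2 : (n : ℝ) ^ r ≤ (n : ℝ) ^ (⌈r⌉₊ : ℕ) := by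
        rw [← Real.rpow_natCast]
        exact Real.rpow_le_rpow_of_exponent_le (by exact_mod_cast hn) (Nat.le_ceil r)
      have h3 : rexp (-((n ^ k : ℕ) : ℝ) * t) ≤ rexp (-t) ^ n := by
        rw [← Real.exp_nat_mul]
        apply Real.exp_le_exp.mpr
        have : (n : ℝ) ≤ ((n ^ k : ℕ) : ℝ) := by
          exact_mod_cast Nat.le_self_pow (by omega) n
        nlinarith
      calc ‖a n‖ * rexp (-((n ^ k : ℕ) : ℝ) * t)
          ≤ (C * (n : ℝ) ^ r) * (rexp (-t) ^ n) := by
            apply mul_le_mul h1 h3 (Real.exp_pos _).le (by positivity)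
        _ ≤ C * ((n : ℝ) ^ (⌈r⌉₊) * rexp (-t) ^ n) := by
            rw [mul_assoc]
            exact mul_le_mul_of_nonneg_left
              (mul_le_mul_of_nonneg_right h2 (by positivity)) hC
  -- the integral equals the mellin transform of F
  have hmell : (∫ z in Set.Ioo (0:ℝ) 1,
      ((-Real.log z : ℝ) : ℂ) ^ (w - 1) * (∑' n : ℕ, a n * (z : ℂ) ^ (n ^ k)) * (z : ℂ)⁻¹)
      = mellin F w := by
    rw [subst_exp]
    rw [mellin]
    refine setIntegral_congr_fun measurableSet_Ioi fun t ht => ?_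
    have hlog : Real.log (rexp (-t)) = -t := Real.log_exp _
    have htsum : (∑' n : ℕ, a n * ((rexp (-t) : ℝ) : ℂ) ^ (n ^ k)) = F t := by
      refine tsum_congr fun n => ?_
      congr 1
      rw [← Complex.ofReal_pow, ← Real.exp_nat_mul]
      congr 1
      ring
    rw [hlog, neg_neg, htsum, Complex.real_smul, smul_eq_mul]
    have hne : ((rexp (-t) : ℝ) : ℂ) ≠ 0 := by
      exact_mod_cast (Real.exp_pos _).ne'
    field_simp
  -- hasSum_mellin
  have hhs : HasSum (fun n : ℕ => Complex.Gamma w * a n / ((n ^ k : ℕ) : ℝ) ^ w)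
      (mellin F w) := by
    refine hasSum_mellin (fun n => ?_) hw (fun t ht => ?_) ?_
    · rcases Nat.eq_zero_or_pos n with rfl | hn
      · exact Or.inl ha0
      · exact Or.inr (by positivity)
    · exact (hsummF t ht).hasSum
    · -- Summable fun n => ‖a n‖ / ((n^k : ℕ):ℝ) ^ w.re
      have hsum2 : Summable fun n : ℕ => C * (n : ℝ) ^ (r - k * w.re) := by
        refine Summable.mul_left C (Real.summable_nat_rpow.mpr (by linarith))
      refine hsum2.of_nonneg_of_le (fun n => by positivity) (fun n => ?_)
      rcases Nat.eq_zero_or_pos n with rfl | hn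
      · simp [ha0]; positivity
      · have hn0 : (0:ℝ) < (n:ℝ) := by exact_mod_cast hn
        have hp : ((n ^ k : ℕ) : ℝ) ^ w.re = (n : ℝ) ^ ((k : ℝ) * w.re) := by
          push_cast
          rw [← Real.rpow_natCast (n:ℝ) k, ← Real.rpow_mul hn0.le]
        rw [hp, div_le_iff₀ (by positivity)]
        calc ‖a n‖ ≤ C * (n : ℝ) ^ r := ha n hn
          _ = C * (n : ℝ) ^ (r - k * w.re) * (n : ℝ) ^ ((k:ℝ) * w.re) := by
              rw [mul_assoc, ← Real.rpow_add hn0]; ring_nf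
  -- put it together
  rw [hmell, ← hhs.tsum_eq, ← tsum_mul_left]
  refine tsum_congr fun n => ?_
  rcases Nat.eq_zero_or_pos n with rfl | hn
  · simp [ha0]
  · have hn0 : (0:ℝ) < (n:ℝ) := by exact_mod_cast hn
    have hΓ : Complex.Gamma w ≠ 0 := Complex.Gamma_ne_zero_of_re_pos hw
    have hlog1 : Complex.log (((n ^ k : ℕ) : ℝ) : ℂ) = ((k : ℝ) * Real.log n : ℝ) := by
      rw [← Complex.ofReal_log (by positivity)]
      congr 1
      push_cast
      exact Real.log_pow (n:ℝ) k
    have hcl : ((((n ^ k : ℕ) : ℝ)) : ℂ) ^ w = (n : ℂ) ^ ((k : ℂ) * w) := by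
      rw [Complex.cpow_def_of_ne_zero (by exact_mod_cast (by positivity : ((n ^ k : ℕ):ℝ) ≠ 0)),
        Complex.cpow_def_of_ne_zero (by exact_mod_cast hn0.ne'),
        hlog1]
      rw [← Complex.natCast_log]
      congr 1
      push_cast
      ring
    rw [hcl, Complex.cpow_neg]
    field_simp

theorem stmt_5 (r : ℝ) (hr : 0 ≤ r) (a : ℕ → ℂ) (ha0 : a 0 = 0)
    (C : ℝ) (hC : 0 < C) (ha : ∀ n : ℕ, 1 ≤ n → ‖a n‖ ≤ C * (n : ℝ) ^ r)
    (k : ℕ) (hk : 1 ≤ k) (b : ℕ → ℂ)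
    (hb1 : ∀ n : ℕ, 1 ≤ n → b (n ^ k) = a n)
    (hb2 : ∀ m : ℕ, (¬ ∃ n : ℕ, 1 ≤ n ∧ m = n ^ k) → b m = 0) :
    (∀ m : ℕ, 1 ≤ m → ‖b m‖ ≤ C * (m : ℝ) ^ (r / k)) ∧
    ∀ s : ℂ, r + k < s.re →
      (1 / Complex.Gamma s) *
        ∫ z in Set.Ioo (0:ℝ) 1,
          ((-Real.log z : ℝ) : ℂ) ^ (s - 1) * (∑' n : ℕ, a n * (z : ℂ) ^ n) * (z : ℂ)⁻¹ =
      (1 / Complex.Gamma (s / k)) *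
        ∫ z in Set.Ioo (0:ℝ) 1,
          ((-Real.log z : ℝ) : ℂ) ^ (s / k - 1) *
            (∑' n : ℕ, a n * (z : ℂ) ^ (n ^ k)) * (z : ℂ)⁻¹ := by
  have hk0 : (k : ℝ) ≠ 0 := by positivity
  have hk1 : (1 : ℝ) ≤ (k : ℝ) := by exact_mod_cast hk
  constructor
  · intro m hm
    by_cases h : ∃ n : ℕ, 1 ≤ n ∧ m = n ^ k
    · obtain ⟨n, hn, rfl⟩ := h
      rw [hb1 n hn]
      have hcast : ((n ^ k : ℕ) : ℝ) ^ (r / k) = (n : ℝ) ^ r := by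
        push_cast
        rw [← Real.rpow_natCast (n:ℝ) k, ← Real.rpow_mul (Nat.cast_nonneg n)]
        congr 1
        field_simp
      rw [hcast]
      exact ha n hn
    · rw [hb2 m h]
      simp only [norm_zero]
      positivity
  · intro s hs
    have hs1 : 0 < s.re := by linarith
    have hsk : (s / (k : ℂ)).re = s.re / (k : ℝ) := by
      rw [Complex.div_re]
      simp [Complex.normSq_natCast]
      field_simp
    have h1 := key r hr a ha0 C hC.le ha 1 le_rfl s hs1 (by norm_num; linarith)
    have h2 := key r hr a ha0 C hC.le ha k hk (s / (k : ℂ))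
      (by rw [hsk]; positivity)
      (by rw [hsk]; rw [mul_div_cancel₀ _ hk0]; linarith)
    simp only [pow_one, Nat.cast_one, one_mul] at h1
    rw [h1]
    rw [h2, mul_div_cancel₀ _ (by exact_mod_cast hk0 : (k:ℂ) ≠ 0)]
end

section
/- For every s ∈ ℂ with Re s > 1, the completed zeta function satisfies π^{−s/2} · Γ(s/2) · ζ(s) = (1/Γ((s+1)/2)) · ∫_0^1 ((log x)^2 / (4π))^{(s−1)/2} · (1 − x)^{−1} dx, where ((log x)^2/(4π))^{(s−1)/2} denotes the complex power of the positive real (log x)^2/(4π). -/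
open MeasureTheory Real Set

lemma aux_exp_frac (t : ℝ) (ht : 0 < t) :
    rexp (-t) * (1 - rexp (-t))⁻¹ = (rexp t - 1)⁻¹ := by
  have h : 1 - rexp (-t) = rexp (-t) * (rexp t - 1) := by
    rw [mul_sub, mul_one, ← Real.exp_add, neg_add_cancel, Real.exp_zero]
  rw [h, mul_inv, ← mul_assoc, mul_inv_cancel₀ (Real.exp_ne_zero _), one_mul]

lemma aux_mellin_zeta {s : ℂ} (hs : 1 < s.re) :
    mellin (fun t : ℝ ↦ ((rexp t - 1 : ℝ) : ℂ)⁻¹) s = Complex.Gamma s * riemannZeta s := by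
  have hs0 : 0 < s.re := by linarith
  have key := hasSum_mellin (F := fun t : ℝ ↦ ((rexp t - 1 : ℝ) : ℂ)⁻¹)
    (a := fun _ : ℕ ↦ (1 : ℂ)) (p := fun i : ℕ ↦ (i + 1 : ℝ))
    (fun i ↦ Or.inr (by positivity)) hs0 ?_ ?_
  · rw [← key.tsum_eq, zeta_eq_tsum_one_div_nat_add_one_cpow hs, ← tsum_mul_left]
    congr 1 with i
    push_cast
    ring
  · intro t ht
    have hlt : rexp (-t) < 1 := Real.exp_lt_one_iff.mpr (by simpa using ht)
    have hgeo : HasSum (fun i : ℕ ↦ rexp (-t) ^ i) ((1 - rexp (-t))⁻¹) :=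
      hasSum_geometric_of_lt_one (Real.exp_nonneg _) hlt
    have h2 : HasSum (fun i : ℕ ↦ rexp (-t) * rexp (-t) ^ i)
        (rexp (-t) * (1 - rexp (-t))⁻¹) := hgeo.mul_left _
    rw [aux_exp_frac t ht] at h2
    have h3 := Complex.hasSum_ofReal.mpr h2
    rw [Complex.ofReal_inv] at h3
    refine h3.congr_fun fun i ↦ ?_
    rw [one_mul]
    norm_cast
    rw [← Real.exp_nat_mul, ← Real.exp_add]
    congr 1
    push_cast
    ring
  · simp only [norm_one]
    have : Summable fun n : ℕ ↦ 1 / (n : ℝ) ^ s.re :=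
      Real.summable_one_div_nat_rpow.mpr hs
    have := (summable_nat_add_iff 1).mpr this
    refine this.congr fun i ↦ ?_
    push_cast
    ring_nf

theorem stmt_7 (s : ℂ) (hs : 1 < s.re) :
    (Real.pi : ℂ) ^ (-s / 2) * Complex.Gamma (s / 2) * riemannZeta s =
      (1 / Complex.Gamma ((s + 1) / 2)) *
        ∫ x in Set.Ioo (0:ℝ) 1,
          (((Real.log x) ^ 2 / (4 * Real.pi) : ℝ) : ℂ) ^ ((s - 1) / 2) * (1 - (x : ℂ))⁻¹ := by
  set C : ℂ := ((4 * Real.pi : ℝ) : ℂ) ^ ((1 - s) / 2) with hCdef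
  set g : ℝ → ℂ := fun x ↦
    (((Real.log x) ^ 2 / (4 * Real.pi) : ℝ) : ℂ) ^ ((s - 1) / 2) * (1 - (x : ℂ))⁻¹ with hg
  -- substitution x = exp (-t)
  have himg : (fun t : ℝ ↦ rexp (-t)) '' Set.Ioi 0 = Set.Ioo 0 1 := by
    ext y
    simp only [Set.mem_image, Set.mem_Ioi, Set.mem_Ioo]
    constructor
    · rintro ⟨t, ht, rfl⟩
      exact ⟨Real.exp_pos _, Real.exp_lt_one_iff.mpr (by linarith)⟩
    · rintro ⟨hy0, hy1⟩
      exact ⟨-Real.log y, by simpa using Real.log_neg hy0 hy1,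
        by rw [neg_neg, Real.exp_log hy0]⟩
  have hderiv : ∀ t ∈ Set.Ioi (0:ℝ),
      HasDerivWithinAt (fun t : ℝ ↦ rexp (-t)) (-rexp (-t)) (Set.Ioi 0) t := by
    intro t _
    simpa [Function.comp_def] using ((Real.hasDerivAt_exp (-t)).comp t (hasDerivAt_neg t)).hasDerivWithinAt
  have hinj : Set.InjOn (fun t : ℝ ↦ rexp (-t)) (Set.Ioi 0) := by
    intro a _ b _ h
    simpa using Real.exp_injective h
  have hsub : (∫ x in Set.Ioo (0:ℝ) 1, g x) =
      ∫ t in Set.Ioi (0:ℝ), |(-rexp (-t))| • g (rexp (-t)) := by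
    rw [← himg, integral_image_eq_integral_abs_deriv_smul measurableSet_Ioi hderiv hinj]
  have hpt : ∀ t ∈ Set.Ioi (0:ℝ), |(-rexp (-t))| • g (rexp (-t)) =
      C * ((t : ℂ) ^ (s - 1) • ((rexp t - 1 : ℝ) : ℂ)⁻¹) := by
    intro t ht
    rw [Set.mem_Ioi] at ht
    have htne : (t : ℂ) ≠ 0 := Complex.ofReal_ne_zero.mpr ht.ne'
    have hA : (((Real.log (rexp (-t))) ^ 2 / (4 * Real.pi) : ℝ) : ℂ) ^ ((s - 1) / 2)
        = (t : ℂ) ^ (s - 1) * C := by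
      rw [Real.log_exp, neg_sq,
        show (t ^ 2 / (4 * Real.pi) : ℝ) = t * t * (4 * Real.pi)⁻¹ by ring,
        Complex.ofReal_mul,
        Complex.mul_cpow_ofReal_nonneg (by positivity) (by positivity),
        Complex.ofReal_mul,
        Complex.mul_cpow_ofReal_nonneg ht.le ht.le, ← Complex.cpow_add _ _ htne]
      rw [Complex.ofReal_inv, Complex.inv_cpow _ _
        (by rw [Complex.arg_ofReal_of_nonneg (by positivity)]; exact Real.pi_ne_zero.symm)]
      rw [← Complex.cpow_neg]
      congr 1
      · ring
      · rw [hCdef]; congr 1; ring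
    have hB : ((rexp (-t) : ℝ) : ℂ) * (1 - ((rexp (-t) : ℝ) : ℂ))⁻¹
        = ((rexp t - 1 : ℝ) : ℂ)⁻¹ := by
      have h := congrArg (fun r : ℝ ↦ (r : ℂ)) (aux_exp_frac t ht)
      simp only [Complex.ofReal_mul, Complex.ofReal_inv, Complex.ofReal_sub,
        Complex.ofReal_one] at h
      rw [Complex.ofReal_sub, Complex.ofReal_one]
      exact h
    rw [abs_neg, abs_of_pos (Real.exp_pos _), hg]
    simp only [Complex.real_smul, smul_eq_mul]
    rw [hA]
    linear_combination ((t : ℂ) ^ (s - 1) * C) * hB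
  have hint : (∫ x in Set.Ioo (0:ℝ) 1, g x) = C * (Complex.Gamma s * riemannZeta s) := by
    rw [hsub, setIntegral_congr_fun measurableSet_Ioi hpt, integral_const_mul,
      ← aux_mellin_zeta hs]
    rfl
  -- final Gamma algebra
  have hdup : Complex.Gamma (s / 2) * Complex.Gamma ((s + 1) / 2) =
      Complex.Gamma s * (2 : ℂ) ^ (1 - s) * (Real.sqrt Real.pi : ℂ) := by
    have h := Complex.Gamma_mul_Gamma_add_half (s / 2)
    rw [show s / 2 + 1 / 2 = (s + 1) / 2 by ring, show (2 : ℂ) * (s / 2) = s by ring] at h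
    rw [h]
  have hC : C = (2 : ℂ) ^ (1 - s) * (Real.sqrt Real.pi : ℂ) * (Real.pi : ℂ) ^ (-s / 2) := by
    rw [hCdef, show (4 * Real.pi : ℝ) = 2 * (2 * Real.pi) by ring, Complex.ofReal_mul,
      Complex.mul_cpow_ofReal_nonneg (by norm_num) (by positivity),
      Complex.ofReal_mul,
      Complex.mul_cpow_ofReal_nonneg (by norm_num) Real.pi_pos.le,
      ← mul_assoc,
      ← Complex.cpow_add _ _ (by norm_num : ((2:ℝ):ℂ) ≠ 0),
      show ((1 - s) / 2 + (1 - s) / 2 : ℂ) = 1 - s by ring,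
      show ((1 - s) / 2 : ℂ) = 1 / 2 + -s / 2 by ring,
      Complex.cpow_add _ _ (Complex.ofReal_ne_zero.mpr Real.pi_ne_zero), ← mul_assoc]
    congr 2
    · rw [Real.sqrt_eq_rpow, Complex.ofReal_cpow Real.pi_pos.le]
      norm_num
  have hne : Complex.Gamma ((s + 1) / 2) ≠ 0 := by
    apply Complex.Gamma_ne_zero_of_re_pos
    rw [show ((s + 1) / 2 : ℂ) = (s + 1) / ((2:ℝ):ℂ) by norm_num, Complex.div_ofReal_re]
    simp only [Complex.add_re, Complex.one_re]
    linarith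
  rw [hint, hC, one_div, eq_comm, mul_comm, mul_inv_eq_iff_eq_mul₀ hne]
  linear_combination -(Real.pi : ℂ) ^ (-s / 2) * riemannZeta s * hdup
end

section
/- Let w ∈ ℂ with |w| < 1 and let s ∈ ℂ with Re s > 1. Then the polylogarithm Li_s(w) = Σ_{n≥1} w^n / n^s satisfies Li_s(w) = (1/Γ(s)) · ∫_0^1 (−log t)^{s−1} · w · (1 − w·t)^{−1} dt. -/
open MeasureTheory

theorem stmt_9 (w : ℂ) (hw : ‖w‖ < 1) (s : ℂ) (hs : 1 < s.re) :
    ∑' n : ℕ, w ^ n / (n : ℂ) ^ s =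
      (1 / Complex.Gamma s) *
        ∫ t in Set.Ioo (0:ℝ) 1,
          ((-Real.log t : ℝ) : ℂ) ^ (s - 1) * w * (1 - w * (t : ℂ))⁻¹ := by
  have hs0 : 0 < s.re := by linarith
  have hsne : s ≠ 0 := by
    intro h; rw [h] at hs0; simp at hs0
  have hΓ : Complex.Gamma s ≠ 0 := Complex.Gamma_ne_zero_of_re_pos hs0
  set F : ℝ → ℂ := fun t => w * Real.exp (-t) * (1 - w * Real.exp (-t))⁻¹ with hFdef
  set a : ℕ → ℂ := fun n => if n = 0 then 0 else w ^ n with hadef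
  -- the geometric series
  have hnorm : ∀ t : ℝ, 0 < t → ‖w * (Real.exp (-t) : ℂ)‖ < 1 := by
    intro t ht
    have h1 : Real.exp (-t) < 1 := Real.exp_lt_one_iff.mpr (by linarith)
    have h2 : (0:ℝ) < Real.exp (-t) := Real.exp_pos _
    rw [norm_mul, Complex.norm_real, Real.norm_eq_abs, abs_of_pos h2]
    nlinarith [norm_nonneg w]
  have hF : ∀ t ∈ Set.Ioi (0:ℝ), HasSum (fun n : ℕ ↦ a n * Real.exp (-(n:ℝ) * t)) (F t) := by
    intro t ht
    rw [Set.mem_Ioi] at ht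
    set z : ℂ := w * Real.exp (-t) with hz
    have h0 : HasSum (fun n : ℕ => z * z ^ n) (z * (1 - z)⁻¹) :=
      (hasSum_geometric_of_norm_lt_one (hnorm t ht)).mul_left z
    have h1 : HasSum (fun n : ℕ => a (n + 1) * (Real.exp (-((n:ℝ)+1) * t) : ℂ)) (z * (1 - z)⁻¹) := by
      refine h0.congr_fun fun n => ?_
      have ha1 : a (n+1) = w ^ (n+1) := by simp [hadef]
      have he : (Real.exp (-((n:ℝ)+1) * t) : ℂ) = ((Real.exp (-t)) : ℂ) ^ (n+1) := by
        rw [← Complex.ofReal_pow, ← Real.exp_nat_mul]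
        push_cast; ring_nf
      rw [ha1, hz, he, mul_pow]
      ring
    refine (hasSum_nat_add_iff' (f := fun n : ℕ => a n * (Real.exp (-(n:ℝ) * t) : ℂ))
      (g := F t) 1).mp ?_
    have hsub : F t - ∑ i ∈ Finset.range 1, a i * (Real.exp (-(i:ℝ) * t) : ℂ)
        = z * (1 - z)⁻¹ := by
      simp [hadef, hFdef, hz, mul_assoc]
    rw [hsub]
    exact h1.congr_fun fun n => by push_cast; try ring_nf
  have h_sum : Summable fun n : ℕ ↦ ‖a n‖ / (n:ℝ) ^ s.re := by
    refine Summable.of_nonneg_of_le (fun n => by positivity) (fun n => ?_)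
      (summable_geometric_of_lt_one (norm_nonneg w) hw)
    rcases Nat.eq_zero_or_pos n with h | h
    · simp only [hadef, h, if_pos rfl, norm_zero, zero_div]
      positivity
    · have hn0 : n ≠ 0 := Nat.pos_iff_ne_zero.mp h
      have h1 : (1:ℝ) ≤ (n:ℝ) ^ s.re :=
        Real.one_le_rpow (Nat.one_le_cast.mpr h) (by linarith)
      have h2 : ‖a n‖ = ‖w‖ ^ n := by simp [hadef, hn0]
      rw [h2]
      exact div_le_self (by positivity) h1
  have key := hasSum_mellin (a := a) (p := fun n : ℕ => (n:ℝ)) (F := F)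
    (fun n => by rcases Nat.eq_zero_or_pos n with h | h
                 · exact Or.inl (by simp [hadef, h])
                 · exact Or.inr (by simpa using (Nat.cast_pos (α := ℝ)).mpr h)) hs0
    (by intro t ht; simpa using hF t ht) h_sum
  -- identify the sum
  have h2 : HasSum (fun n : ℕ ↦ w ^ n / (n:ℂ) ^ s) ((1 / Complex.Gamma s) * mellin F s) := by
    refine (key.mul_left (1 / Complex.Gamma s)).congr_fun fun n => ?_
    rcases Nat.eq_zero_or_pos n with h | h
    · simp [hadef, h, Complex.zero_cpow hsne]
    · have : a n = w ^ n := by simp [hadef, Nat.pos_iff_ne_zero.mp h]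
      rw [this]
      have hn : ((n:ℂ)) ^ s ≠ 0 := by
        rw [Ne, Complex.cpow_eq_zero_iff, not_and_or]
        exact Or.inl (Nat.cast_ne_zero.mpr (Nat.pos_iff_ne_zero.mp h))
      push_cast
      field_simp
  -- substitution x = exp(-u)
  have himg : (fun u : ℝ => Real.exp (-u)) '' Set.Ioi 0 = Set.Ioo (0:ℝ) 1 := by
    ext x
    constructor
    · rintro ⟨u, hu, rfl⟩
      rw [Set.mem_Ioi] at hu
      exact ⟨Real.exp_pos _, Real.exp_lt_one_iff.mpr (by linarith)⟩
    · rintro ⟨hx0, hx1⟩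
      exact ⟨-Real.log x, by simpa [Set.mem_Ioi] using Real.log_neg hx0 hx1, by
        simp [Real.exp_log hx0]⟩
  have hderiv : ∀ u ∈ Set.Ioi (0:ℝ),
      HasDerivWithinAt (fun u : ℝ => Real.exp (-u)) (-Real.exp (-u)) (Set.Ioi 0) u := by
    intro u _
    have : HasDerivAt (fun u : ℝ => Real.exp (-u)) (-Real.exp (-u)) u := by
      have h := ((Real.hasDerivAt_exp (-u)).comp u (hasDerivAt_neg u)); simp at h; exact h
    exact this.hasDerivWithinAt
  have hinj : Set.InjOn (fun u : ℝ => Real.exp (-u)) (Set.Ioi 0) :=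
    (Real.exp_injective.comp neg_injective).injOn
  have hIeq : (∫ t in Set.Ioo (0:ℝ) 1,
      ((-Real.log t : ℝ) : ℂ) ^ (s - 1) * w * (1 - w * (t : ℂ))⁻¹) = mellin F s := by
    rw [← himg, integral_image_eq_integral_abs_deriv_smul measurableSet_Ioi hderiv hinj]
    rw [mellin]
    refine setIntegral_congr_fun measurableSet_Ioi fun u hu => ?_
    rw [Set.mem_Ioi] at hu
    have h1 : |(-Real.exp (-u))| = Real.exp (-u) := by
      rw [abs_neg, abs_of_pos (Real.exp_pos _)]
    rw [h1, Real.log_exp, Complex.real_smul, smul_eq_mul, hFdef]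
    push_cast
    ring
  rw [hIeq]
  exact h2.tsum_eq
end

section
/- Let a ≥ 2 be an integer and define ξ_a(n) = 1 if a does not divide n and ξ_a(n) = 1 − a if a divides n. Suppose Ψ : ℂ → ℂ is analytic on an open neighborhood U of 1 and satisfies Ψ(t) = (Σ_{n=1}^{a} ξ_a(n) t^n) / (1 − t^a) for all t ∈ U with t^a ≠ 1. Let D denote the differential operator (D f)(t) = t · f′(t). Then for every positive integer m, (D^m Ψ)(1) = (1 − a^{m+1}) · ζ(−m), where ζ is the (analytically continued) Riemann zeta function. -/
open Finset in
private lemma itder_add {s : Set ℂ} (hs : IsOpen s) : ∀ (n : ℕ) (f g : ℂ → ℂ),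
    AnalyticOnNhd ℂ f s → AnalyticOnNhd ℂ g s → ∀ x ∈ s,
    iteratedDeriv n (fun y => f y + g y) x = iteratedDeriv n f x + iteratedDeriv n g x := by
  intro n
  induction n with
  | zero => simp
  | succ n ih =>
    intro f g hf hg x hx
    rw [iteratedDeriv_succ', iteratedDeriv_succ', iteratedDeriv_succ']
    have h1 : Set.EqOn (deriv fun y => f y + g y) (fun y => deriv f y + deriv g y) s :=
      fun y hy => deriv_fun_add ((hf y hy).differentiableAt) ((hg y hy).differentiableAt)
    rw [(h1.iteratedDeriv_of_isOpen hs n) hx]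
    exact ih _ _ hf.deriv hg.deriv x hx

open Finset in
private lemma pascal_sum (n : ℕ) (u v : ℕ → ℂ) :
    ∑ k ∈ range (n+1), (n.choose k : ℂ) * u (k+1) * v (n-k)
      + ∑ k ∈ range (n+1), (n.choose k : ℂ) * u k * v (n-k+1)
    = ∑ k ∈ range (n+2), ((n+1).choose k : ℂ) * u k * v (n+1-k) := by
  have h2 : ∑ k ∈ range (n+1), (n.choose k : ℂ) * u k * v (n-k+1)
      = ∑ k ∈ range n, (n.choose (k+1) : ℂ) * u (k+1) * v (n-k) + u 0 * v (n+1) := by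
    rw [Finset.sum_range_succ' (fun k => (n.choose k : ℂ) * u k * v (n-k+1))]
    congr 1
    · exact Finset.sum_congr rfl fun k hk => by
        have hkn : k < n := Finset.mem_range.mp hk
        have : n - (k+1) + 1 = n - k := by omega
        rw [this]
    · simp
  have hr : ∑ k ∈ range (n+2), ((n+1).choose k : ℂ) * u k * v (n+1-k)
      = ∑ k ∈ range (n+1), ((n+1).choose (k+1) : ℂ) * u (k+1) * v (n-k)
        + u 0 * v (n+1) := by
    rw [Finset.sum_range_succ']
    simp [Nat.succ_sub_succ]
  have hsplit : ∑ k ∈ range (n+1), ((n+1).choose (k+1) : ℂ) * u (k+1) * v (n-k)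
      = ∑ k ∈ range (n+1), (n.choose k : ℂ) * u (k+1) * v (n-k)
        + ∑ k ∈ range (n+1), (n.choose (k+1) : ℂ) * u (k+1) * v (n-k) := by
    rw [← Finset.sum_add_distrib]
    exact Finset.sum_congr rfl fun k _ => by rw [Nat.choose_succ_succ]; push_cast; ring
  have h3 : ∑ k ∈ range (n+1), (n.choose (k+1) : ℂ) * u (k+1) * v (n-k)
      = ∑ k ∈ range n, (n.choose (k+1) : ℂ) * u (k+1) * v (n-k) := by
    rw [Finset.sum_range_succ]
    simp
  rw [h2, hr, hsplit, h3]
  ring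

open Finset in
private lemma itder_mul {s : Set ℂ} (hs : IsOpen s) : ∀ (n : ℕ) (f g : ℂ → ℂ),
    AnalyticOnNhd ℂ f s → AnalyticOnNhd ℂ g s → ∀ x ∈ s,
    iteratedDeriv n (fun y => f y * g y) x
      = ∑ k ∈ range (n+1), (n.choose k : ℂ) * iteratedDeriv k f x * iteratedDeriv (n-k) g x := by
  intro n
  induction n with
  | zero => simp
  | succ n ih =>
    intro f g hf hg x hx
    rw [iteratedDeriv_succ']
    have h1 : Set.EqOn (deriv fun y => f y * g y)
        (fun y => deriv f y * g y + f y * deriv g y) s :=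
      fun y hy => deriv_mul ((hf y hy).differentiableAt) ((hg y hy).differentiableAt)
    rw [(h1.iteratedDeriv_of_isOpen hs n) hx]
    rw [itder_add hs n _ _ (hf.deriv.mul hg) (hf.mul hg.deriv) x hx]
    rw [ih _ _ hf.deriv hg x hx, ih _ _ hf hg.deriv x hx]
    have e1 : ∀ k, iteratedDeriv k (deriv f) x = iteratedDeriv (k+1) f x :=
      fun k => by rw [← iteratedDeriv_succ']
    have e2 : ∀ k, iteratedDeriv k (deriv g) x = iteratedDeriv (k+1) g x :=
      fun k => by rw [← iteratedDeriv_succ']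
    simp only [e1, e2]
    exact pascal_sum n (fun k => iteratedDeriv k f x) (fun k => iteratedDeriv k g x)

open Finset Complex in
private lemma itder_expsum {ι : Type} (s : Finset ι) (d : ι → ℂ) :
    ∀ (n : ℕ) (c : ι → ℂ), iteratedDeriv n (fun z => ∑ j ∈ s, c j * Complex.exp (d j * z))
      = fun z => ∑ j ∈ s, c j * d j ^ n * Complex.exp (d j * z) := by
  intro n
  induction n with
  | zero => intro c; simp
  | succ n ih =>
    intro c
    rw [iteratedDeriv_succ']
    have hd : deriv (fun z => ∑ j ∈ s, c j * Complex.exp (d j * z))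
        = fun z => ∑ j ∈ s, (c j * d j) * Complex.exp (d j * z) := by
      funext z
      have : ∀ j ∈ s, HasDerivAt (fun z => c j * Complex.exp (d j * z))
          ((c j * d j) * Complex.exp (d j * z)) z := by
        intro j _
        have h1 : HasDerivAt (fun z : ℂ => d j * z) (d j) z := by
          simpa using (hasDerivAt_id z).const_mul (d j)
        have h2 := h1.cexp
        have h3 := h2.const_mul (c j)
        exact h3.congr_deriv (by ring)
      exact (HasDerivAt.fun_sum this).deriv
    rw [hd, ih]
    funext z
    exact Finset.sum_congr rfl fun j _ => by ring

private lemma chain {Ψ : ℂ → ℂ} {U : Set ℂ} (hU : IsOpen U) (hA : AnalyticOnNhd ℂ Ψ U) :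
    ∀ n : ℕ, AnalyticOnNhd ℂ ((fun f : ℂ → ℂ => fun t => t * deriv f t)^[n] Ψ) U ∧
      ∀ z : ℂ, Complex.exp z ∈ U →
        iteratedDeriv n (fun w => Ψ (Complex.exp w)) z
          = ((fun f : ℂ → ℂ => fun t => t * deriv f t)^[n] Ψ) (Complex.exp z) := by
  intro n
  induction n with
  | zero => exact ⟨hA, fun z _ => by simp⟩
  | succ n ih =>
    obtain ⟨hDn, heq⟩ := ih
    constructor
    · rw [Function.iterate_succ_apply']
      exact fun x hx => (analyticAt_id.mul ((hDn.deriv) x hx))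
    · intro z hz
      have hV : IsOpen (Complex.exp ⁻¹' U) := hU.preimage Complex.continuous_exp
      have hzV : z ∈ Complex.exp ⁻¹' U := hz
      rw [iteratedDeriv_succ]
      have hEq : Set.EqOn (iteratedDeriv n (fun w => Ψ (Complex.exp w)))
          (fun w => ((fun f : ℂ → ℂ => fun t => t * deriv f t)^[n] Ψ) (Complex.exp w))
          (Complex.exp ⁻¹' U) := fun w hw => heq w hw
      have hev : (iteratedDeriv n (fun w => Ψ (Complex.exp w)))
          =ᶠ[nhds z] (fun w => ((fun f : ℂ → ℂ => fun t => t * deriv f t)^[n] Ψ) (Complex.exp w)) :=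
        Filter.eventuallyEq_of_mem (hV.mem_nhds hzV) hEq
      rw [hev.deriv_eq]
      have hder : HasDerivAt (fun w => ((fun f : ℂ → ℂ => fun t => t * deriv f t)^[n] Ψ) (Complex.exp w))
          (deriv ((fun f : ℂ → ℂ => fun t => t * deriv f t)^[n] Ψ) (Complex.exp z) * Complex.exp z) z :=
        HasDerivAt.comp z ((hDn (Complex.exp z) hz).differentiableAt.hasDerivAt)
          (Complex.hasDerivAt_exp z)
      rw [hder.deriv, Function.iterate_succ_apply']
      ring

open Finset in
private lemma alg (a n : ℕ) (ha : 1 ≤ a) (hn : 1 ≤ n) :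
    ∑ k ∈ range n, (n.choose k : ℚ) * (a:ℚ)^(n-k) *
      (((a:ℚ)^(k+1) - 1) * bernoulli (k+1) / (k+1) + (if k = 0 then (a:ℚ) - 1 else 0))
    = (a:ℚ)^(n+1) - ∑ j ∈ Finset.Icc 1 a, (j:ℚ)^n := by
  have hPa : ∑ j ∈ Finset.Icc 1 a, (j:ℚ)^n
      = ∑ j ∈ range a, (j:ℚ)^n + (a:ℚ)^n := by
    rw [← Finset.sum_range_succ]
    symm
    rw [← Finset.sum_subset (show Finset.Icc 1 a ⊆ range (a+1) by
      intro j hj; simp only [Finset.mem_Icc] at hj; simp only [Finset.mem_range]; omega)]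
    intro x hx hnx
    simp only [Finset.mem_range] at hx
    simp only [Finset.mem_Icc] at hnx
    have : x = 0 := by omega
    subst this
    exact zero_pow (by omega)
  have hsplit : ∑ k ∈ range n, (n.choose k : ℚ) * (a:ℚ)^(n-k) *
      (((a:ℚ)^(k+1) - 1) * bernoulli (k+1) / (k+1) + (if k = 0 then (a:ℚ) - 1 else 0))
      = (∑ k ∈ range n, (n.choose k : ℚ) * (a:ℚ)^(n-k) *
          (((a:ℚ)^(k+1) - 1) * bernoulli (k+1) / (k+1)))
        + (a:ℚ)^n * ((a:ℚ) - 1) := by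
    have h1 : ∀ k ∈ range n, (n.choose k : ℚ) * (a:ℚ)^(n-k) *
        (((a:ℚ)^(k+1) - 1) * bernoulli (k+1) / (k+1) + (if k = 0 then (a:ℚ) - 1 else 0))
        = (n.choose k : ℚ) * (a:ℚ)^(n-k) * (((a:ℚ)^(k+1) - 1) * bernoulli (k+1) / (k+1))
          + (if k = 0 then (a:ℚ)^n * ((a:ℚ) - 1) else 0) := by
      intro k _
      split_ifs with h
      · subst h
        simp only [Nat.choose_zero_right, Nat.cast_one, Nat.sub_zero]
        ring
      · ring
    rw [Finset.sum_congr rfl h1, Finset.sum_add_distrib,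
      Finset.sum_ite_eq' (range n) 0 (fun _ => (a:ℚ)^n * ((a:ℚ) - 1))]
    simp only [Finset.mem_range]
    rw [if_pos (by omega)]
  have hn1 : ((n:ℚ)+1) ≠ 0 := by positivity
  have hS1 : ∑ k ∈ range n, (((n+1).choose (k+1) : ℚ)) * bernoulli (k+1) = -1 := by
    have h := sum_bernoulli (n+1)
    rw [Finset.sum_range_succ'] at h
    rw [if_neg (by omega)] at h
    simp only [Nat.choose_zero_right, Nat.cast_one, bernoulli_zero, one_mul, mul_one] at h
    linarith
  have hS2 : ∑ k ∈ range n, (((n+1).choose (k+1) : ℚ)) * bernoulli (k+1) * (a:ℚ)^(n-k)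
      = ((n:ℚ)+1) * (∑ j ∈ range a, (j:ℚ)^n) - (a:ℚ)^(n+1) := by
    have h := sum_range_pow a n
    rw [Finset.sum_range_succ'] at h
    simp only [Nat.succ_sub_succ_eq_sub, Nat.choose_zero_right, Nat.cast_one, bernoulli_zero,
      one_mul, mul_one, Nat.sub_zero] at h
    have h2 : ((n:ℚ)+1) * (∑ j ∈ range a, (j:ℚ)^n)
        = (∑ i ∈ range n, ((n:ℚ)+1) * (bernoulli (i+1) * ((n+1).choose (i+1) : ℚ)
            * (a:ℚ)^(n-i) / ((n:ℚ)+1))) + (a:ℚ)^(n+1) := by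
      rw [← Finset.mul_sum, h, mul_add]
      congr 1
      field_simp
    have h3 : ∀ i ∈ range n, ((n:ℚ)+1) * (bernoulli (i+1) * ((n+1).choose (i+1) : ℚ)
        * (a:ℚ)^(n-i) / ((n:ℚ)+1)) = (((n+1).choose (i+1) : ℚ)) * bernoulli (i+1) * (a:ℚ)^(n-i) := by
      intro i _
      field_simp
    rw [Finset.sum_congr rfl h3] at h2
    linarith
  have key : ∀ k ∈ range n, ((n:ℚ)+1) * ((n.choose k : ℚ) * (a:ℚ)^(n-k) *
        (((a:ℚ)^(k+1) - 1) * bernoulli (k+1) / (k+1)))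
      = (((n+1).choose (k+1) : ℚ)) * bernoulli (k+1) * (a:ℚ)^(n+1)
        - (((n+1).choose (k+1) : ℚ)) * bernoulli (k+1) * (a:ℚ)^(n-k) := by
    intro k hk
    have hch : ((n:ℚ)+1) * (n.choose k : ℚ) = ((n+1).choose (k+1) : ℚ) * ((k:ℚ)+1) := by
      exact_mod_cast congrArg (Nat.cast (R := ℚ)) (Nat.add_one_mul_choose_eq n k)
    have hpow : (a:ℚ)^(n-k) * (a:ℚ)^(k+1) = (a:ℚ)^(n+1) := by
      rw [← pow_add]
      congr 1
      have := Finset.mem_range.mp hk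
      omega
    have hk1 : ((k:ℚ)+1) ≠ 0 := by positivity
    rw [← hpow]
    clear hn1
    field_simp
    linear_combination ((a:ℚ)^(k+1) - 1) * bernoulli (k+1) * hch
  have hT : ∑ k ∈ range n, (n.choose k : ℚ) * (a:ℚ)^(n-k) *
      (((a:ℚ)^(k+1) - 1) * bernoulli (k+1) / (k+1))
      = - ∑ j ∈ range a, (j:ℚ)^n := by
    apply mul_left_cancel₀ hn1
    rw [Finset.mul_sum, Finset.sum_congr rfl key, Finset.sum_sub_distrib,
      ← Finset.sum_mul, hS1, hS2]
    ring
  rw [hsplit, hT, hPa]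
  ring


open Finset in
theorem stmt_11 (a : ℕ) (ha : 2 ≤ a) (Ψ : ℂ → ℂ) (U : Set ℂ) (hU : IsOpen U)
    (h1U : (1 : ℂ) ∈ U) (hΨa : ∀ t ∈ U, AnalyticAt ℂ Ψ t)
    (hΨ : ∀ t ∈ U, t ^ a ≠ 1 →
      Ψ t = (∑ n ∈ Finset.Icc 1 a, (if a ∣ n then 1 - (a : ℂ) else 1) * t ^ n) / (1 - t ^ a))
    (m : ℕ) (hm : 0 < m) :
    ((fun f : ℂ → ℂ => fun t => t * deriv f t)^[m] Ψ) 1 =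
      (1 - (a : ℂ) ^ (m + 1)) * riemannZeta (-(m : ℂ)) := by
  have ha0 : 0 < a := by omega
  have haC : (a : ℂ) ≠ 0 := Nat.cast_ne_zero.mpr (by omega)
  set ξ : ℕ → ℂ := fun n => if a ∣ n then 1 - (a : ℂ) else 1 with hξ
  -- the finite set of bad points
  have hfin : ({x : ℂ | x ^ a = 1}).Finite := by
    have h := Polynomial.finite_setOf_isRoot
      (p := (Polynomial.X : Polynomial ℂ) ^ a - Polynomial.C 1)
      (Polynomial.X_pow_sub_C_ne_zero ha0 1)
    convert h using 1
    ext x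
    simp [Polynomial.IsRoot, sub_eq_zero]
  set F : Set ℂ := {x : ℂ | x ^ a = 1} \ {1} with hF
  have hFc : IsClosed F := (Set.Finite.diff hfin (t := {1})).isClosed
  set W : Set ℂ := U ∩ Fᶜ with hWdef
  have hWopen : IsOpen W := hU.inter hFc.isOpen_compl
  have h1W : (1 : ℂ) ∈ W := ⟨h1U, fun hc => hc.2 rfl⟩
  -- ξ values on Icc 1 a
  have hxi : ∀ n ∈ Finset.Icc 1 a, ξ n = 1 + (if n = a then -(a:ℂ) else 0) := by
    intro n hn
    rw [Finset.mem_Icc] at hn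
    by_cases hd : a ∣ n
    · have hna : n = a := by
        have := Nat.le_of_dvd (by omega) hd
        omega
      subst hna
      simp only [hξ, if_pos hd, if_pos rfl, if_true]
      exact sub_eq_add_neg 1 _
    · have hna : n ≠ a := fun h => hd (h ▸ dvd_refl a)
      simp only [hξ, if_neg hd, if_neg hna]
      ring
  have haW : a ∈ Finset.Icc 1 a := Finset.mem_Icc.mpr ⟨by omega, le_refl a⟩
  -- key identity on W
  have hW : ∀ t ∈ W, Ψ t * (1 - t ^ a) = ∑ n ∈ Finset.Icc 1 a, ξ n * t ^ n := by
    intro t ht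
    by_cases h1 : t = 1
    · subst h1
      have hP1 : ∑ n ∈ Finset.Icc 1 a, ξ n * (1:ℂ) ^ n = 0 := by
        simp only [one_pow, mul_one]
        rw [Finset.sum_congr rfl hxi, Finset.sum_add_distrib,
          Finset.sum_ite_eq' (Finset.Icc 1 a) a (fun _ => -(a:ℂ)), if_pos haW]
        simp [Nat.card_Icc]
      rw [hP1]
      simp
    · have hta : t ^ a ≠ 1 := by
        intro hc
        exact ht.2 ⟨hc, h1⟩
      rw [hΨ t ht.1 hta, div_mul_cancel₀]
      exact sub_ne_zero_of_ne (Ne.symm hta)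
  -- move to the z-plane
  set V : Set ℂ := Complex.exp ⁻¹' W with hVdef
  have hVopen : IsOpen V := hWopen.preimage Complex.continuous_exp
  have h0V : (0:ℂ) ∈ V := by
    simp only [hVdef, Set.mem_preimage, Complex.exp_zero]
    exact h1W
  have hEq : Set.EqOn (fun z => (Ψ (Complex.exp z)) * (1 - Complex.exp ((a:ℂ)*z)))
      (fun z => ∑ n ∈ Finset.Icc 1 a, ξ n * Complex.exp ((n:ℂ)*z)) V := by
    intro z hz
    have h1 := hW _ hz
    simp only
    rw [Complex.exp_nat_mul]
    rw [h1]
    exact Finset.sum_congr rfl fun n _ => by rw [Complex.exp_nat_mul]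
  -- analyticity
  have hf : AnalyticOnNhd ℂ (fun z => Ψ (Complex.exp z)) V := by
    intro z hz
    exact (hΨa _ hz.1).comp (Complex.differentiable_exp.analyticAt z)
  have hg2 : AnalyticOnNhd ℂ (fun z => 1 - Complex.exp ((a:ℂ)*z)) V := by
    intro z _
    have : Differentiable ℂ (fun z : ℂ => 1 - Complex.exp ((a:ℂ)*z)) :=
      (Complex.differentiable_exp.comp ((differentiable_id.const_mul ((a:ℂ))))).const_sub 1
    exact this.analyticAt z
  -- single exponential iterated derivative
  have hsingle : ∀ (n : ℕ) (c₀ d₀ : ℂ), iteratedDeriv n (fun z => c₀ * Complex.exp (d₀*z))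
      = fun z => c₀ * d₀^n * Complex.exp (d₀*z) := by
    intro n c₀ d₀
    have h := itder_expsum ({0} : Finset ℕ) (fun _ => d₀) n (fun _ => c₀)
    simpa using h
  -- derivatives of the Q factor
  have hderQ : deriv (fun z => 1 - Complex.exp ((a:ℂ)*z))
      = fun z => (-(a:ℂ)) * Complex.exp ((a:ℂ)*z) := by
    funext z
    have h1 : HasDerivAt (fun z : ℂ => (a:ℂ)*z) ((a:ℂ)) z := by
      simpa using (hasDerivAt_id z).const_mul ((a:ℂ))
    have h2 := (h1.cexp).const_sub 1
    rw [h2.deriv]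
    ring
  have hq : ∀ j : ℕ, iteratedDeriv j (fun z => 1 - Complex.exp ((a:ℂ)*z)) 0
      = if j = 0 then 0 else -(a:ℂ)^j := by
    intro j
    cases j with
    | zero => simp
    | succ i =>
      rw [iteratedDeriv_succ', hderQ, hsingle i (-(a:ℂ)) ((a:ℂ))]
      rw [if_neg (Nat.succ_ne_zero i)]
      simp [Complex.exp_zero]
      ring
  -- derivative of the RHS exponential sum
  have hE : ∀ n : ℕ, iteratedDeriv n (fun z => ∑ j ∈ Finset.Icc 1 a, ξ j * Complex.exp ((j:ℂ)*z)) 0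
      = ∑ j ∈ Finset.Icc 1 a, ξ j * (j:ℂ)^n := by
    intro n
    have h := itder_expsum (Finset.Icc 1 a) (fun j => (j:ℂ)) n ξ
    have h2 := congrFun h 0
    simp only [mul_zero, Complex.exp_zero, mul_one] at h2
    exact h2
  -- the Taylor coefficients
  set c : ℕ → ℂ := fun k => iteratedDeriv k (fun w => Ψ (Complex.exp w)) 0 with hc
  -- the recursion
  have hSn : ∀ n : ℕ, ∑ j ∈ Finset.Icc 1 a, ξ j * (j:ℂ)^n
      = (∑ j ∈ Finset.Icc 1 a, (j:ℂ)^n) - (a:ℂ)^(n+1) := by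
    intro n
    have h1 : ∀ j ∈ Finset.Icc 1 a, ξ j * (j:ℂ)^n
        = (j:ℂ)^n + (if j = a then -(a:ℂ)^(n+1) else 0) := by
      intro j hj
      rw [hxi j hj]
      split_ifs with h
      · subst h
        ring
      · ring
    rw [Finset.sum_congr rfl h1, Finset.sum_add_distrib,
      Finset.sum_ite_eq' (Finset.Icc 1 a) a (fun _ => -(a:ℂ)^(n+1)), if_pos haW]
    ring
  have REC : ∀ n : ℕ, 1 ≤ n → ∑ k ∈ range n, (n.choose k : ℂ) * (a:ℂ)^(n-k) * c k
      = (a:ℂ)^(n+1) - ∑ j ∈ Finset.Icc 1 a, (j:ℂ)^n := by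
    intro n hn
    have h1 := (hEq.iteratedDeriv_of_isOpen hVopen n) h0V
    rw [itder_mul hVopen n _ _ hf hg2 0 h0V, hE n] at h1
    rw [Finset.sum_range_succ] at h1
    simp only [hq, hSn n] at h1
    rw [if_pos (Nat.sub_self n)] at h1
    have h2 : ∑ k ∈ range n, (n.choose k : ℂ) * c k
        * (if n - k = 0 then 0 else -(a:ℂ)^(n-k))
        = - ∑ k ∈ range n, (n.choose k : ℂ) * (a:ℂ)^(n-k) * c k := by
      rw [← Finset.sum_neg_distrib]
      apply Finset.sum_congr rfl
      intro k hk
      have hk' : k < n := Finset.mem_range.mp hk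
      rw [if_neg (by omega)]
      ring
    rw [h2] at h1
    have h3 := h1
    linear_combination -h3
  -- the candidate values, cast from ℚ
  set Vc : ℕ → ℂ := fun k => ((a:ℂ)^(k+1)-1) * ((bernoulli (k+1) : ℚ) : ℂ) / ((k:ℂ)+1)
      + (if k = 0 then (a:ℂ)-1 else 0) with hVc
  have algC : ∀ n : ℕ, 1 ≤ n → ∑ k ∈ range n, (n.choose k : ℂ) * (a:ℂ)^(n-k) * Vc k
      = (a:ℂ)^(n+1) - ∑ j ∈ Finset.Icc 1 a, (j:ℂ)^n := by
    intro n hn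
    have h := alg a n (by omega) hn
    have h2 := congrArg (fun q : ℚ => (q : ℂ)) h
    push_cast at h2
    convert h2 using 2 with k hk
    · simp only [hVc]
      split_ifs <;> push_cast <;> ring
  -- strong induction
  have hcV : ∀ k, c k = Vc k := by
    intro k
    induction k using Nat.strong_induction_on with
    | _ k ih =>
      have h1 := REC (k+1) (by omega)
      have h2 := algC (k+1) (by omega)
      rw [Finset.sum_range_succ] at h1 h2
      have h3 : ∑ i ∈ range k, ((k+1).choose i : ℂ) * (a:ℂ)^(k+1-i) * c i
          = ∑ i ∈ range k, ((k+1).choose i : ℂ) * (a:ℂ)^(k+1-i) * Vc i :=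
        Finset.sum_congr rfl fun i hi => by rw [ih i (Finset.mem_range.mp hi)]
      rw [h3] at h1
      have h4 : ((k+1).choose k : ℂ) * (a:ℂ)^(k+1-k) * c k
          = ((k+1).choose k : ℂ) * (a:ℂ)^(k+1-k) * Vc k :=
        add_left_cancel (h1.trans h2.symm)
      have h5 : ((k+1).choose k : ℂ) * (a:ℂ)^(k+1-k) ≠ 0 := by
        apply mul_ne_zero
        · exact_mod_cast Nat.cast_ne_zero.mpr (Nat.choose_pos (by omega)).ne'
        · exact pow_ne_zero _ haC
      exact mul_left_cancel₀ h5 h4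
  -- relate to the goal via the chain rule
  have hchain := (chain hU hΨa m).2 0 (by rw [Complex.exp_zero]; exact h1U)
  rw [Complex.exp_zero] at hchain
  rw [← hchain]
  show c m = (1 - (a : ℂ) ^ (m + 1)) * riemannZeta (-(m : ℂ))
  rw [hcV m, riemannZeta_neg_nat_eq_bernoulli m]
  simp only [hVc, if_neg (by omega : m ≠ 0)]
  rcases Nat.even_or_odd m with he | ho
  · have hb : bernoulli (m+1) = 0 := by
      rw [bernoulli_eq_bernoulli'_of_ne_one (by omega)]
      exact bernoulli'_eq_zero_of_odd (by simpa using he.add_one) (by omega)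
    rw [hb]
    norm_num
  · have hpow : (-1 : ℂ)^m = -1 := ho.neg_one_pow
    rw [hpow]
    ring
end

section
/- Let a ≥ 2 be an integer and define ξ_a(n) = 1 if a does not divide n and ξ_a(n) = 1 − a if a divides n. Then for every s ∈ ℂ with Re s > 1: (1/Γ(s)) · ∫_0^1 (−log t)^{s−1} · (Σ_{n=1}^{a} ξ_a(n) t^n) · ((1 − t^a) · t)^{−1} dt = (1 − a^{1−s}) · ζ(s), where a^{1−s} = exp((1−s)·log a). -/
open MeasureTheory
open Complex Real Set

/-- Pointwise power series identity. -/
lemma stmt12_hasSum_aux (a : ℕ) (ha : 2 ≤ a) (x : ℝ) (hx0 : 0 < x) (hx1 : x < 1) :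
    HasSum (fun n : ℕ ↦ (if n = 0 then 0 else if a ∣ n then 1 - (a:ℂ) else 1) * (x:ℂ)^n)
      ((∑ n ∈ Finset.Icc 1 a, (if a ∣ n then 1 - (a:ℂ) else 1) * (x:ℂ)^n)
        * (1 - (x:ℂ)^a)⁻¹) := by
  have ha0 : 0 < a := by omega
  have hnorm : ‖(x:ℂ)‖ < 1 := by
    rwa [Complex.norm_real, Real.norm_eq_abs, abs_of_pos hx0]
  have hnorma : ‖(x:ℂ)^a‖ < 1 := by
    rw [norm_pow]
    exact pow_lt_one₀ (norm_nonneg _) hnorm ha0.ne'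
  have hne1 : (x:ℂ) ≠ 1 := by
    intro h; rw [h] at hnorm; simp at hnorm
  have hxne : (1:ℂ) - x ≠ 0 := sub_ne_zero_of_ne (Ne.symm hne1)
  have hxane : (1:ℂ) - (x:ℂ)^a ≠ 0 := by
    refine sub_ne_zero_of_ne fun h => ?_
    rw [← h] at hnorma; simp at hnorma
  have h1 : HasSum (fun n : ℕ ↦ (x:ℂ)^n) ((1 - (x:ℂ))⁻¹) :=
    hasSum_geometric_of_norm_lt_one hnorm
  have h2 : HasSum (fun n : ℕ ↦ if a ∣ n then (x:ℂ)^n else 0) ((1 - (x:ℂ)^a)⁻¹) := by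
    have hinj : Function.Injective (fun k : ℕ => a * k) :=
      fun k l h => by simpa [Nat.eq_of_mul_eq_mul_left ha0] using
        Nat.eq_of_mul_eq_mul_left ha0 h
    rw [← hinj.hasSum_iff (by
      intro n hn
      have : ¬ a ∣ n := by
        intro ⟨c, hc⟩; exact hn ⟨c, hc.symm⟩
      simp [this])]
    have : (fun n : ℕ ↦ if a ∣ n then (x:ℂ)^n else 0) ∘ (fun k : ℕ => a * k)
        = fun k : ℕ => ((x:ℂ)^a)^k := by
      funext k
      simp only [Function.comp_apply, if_pos (Dvd.intro k rfl), ← pow_mul]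
    rw [this]
    exact hasSum_geometric_of_norm_lt_one hnorma
  have h3 : HasSum (fun n : ℕ ↦ if n = 0 then (1 - (a:ℂ)) else 0) (1 - (a:ℂ)) :=
    hasSum_ite_eq 0 _
  have H := (h1.sub (h2.mul_left (a:ℂ))).sub h3
  have hfun : (fun n : ℕ ↦ (x:ℂ)^n - (a:ℂ) * (if a ∣ n then (x:ℂ)^n else 0)
      - (if n = 0 then (1 - (a:ℂ)) else 0))
      = fun n : ℕ ↦ (if n = 0 then 0 else if a ∣ n then 1 - (a:ℂ) else 1) * (x:ℂ)^n := by
    funext n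
    rcases eq_or_ne n 0 with rfl | hn
    · simp [Nat.dvd_zero]
    · rw [if_neg hn, if_neg hn]
      by_cases hd : a ∣ n <;> simp [hd] <;> ring
  rw [hfun] at H
  convert H using 1
  · rfl
  -- value identity
  have hsum : (∑ n ∈ Finset.Icc 1 a, (if a ∣ n then 1 - (a:ℂ) else 1) * (x:ℂ)^n)
      = (∑ n ∈ Finset.Icc 1 a, (x:ℂ)^n) - (a:ℂ) * (x:ℂ)^a := by
    have : ∀ n ∈ Finset.Icc 1 a, (if a ∣ n then 1 - (a:ℂ) else 1) * (x:ℂ)^n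
        = (x:ℂ)^n - (if n = a then (a:ℂ) * (x:ℂ)^n else 0) := by
      intro n hn
      simp only [Finset.mem_Icc] at hn
      by_cases hd : a ∣ n
      · have hna : n = a := le_antisymm hn.2 (Nat.le_of_dvd (by omega) hd)
        simp [hd, hna]; ring
      · have hna : n ≠ a := by rintro rfl; exact hd dvd_rfl
        simp [hd, hna]
    rw [Finset.sum_congr rfl this, Finset.sum_sub_distrib,
      Finset.sum_ite_eq' (Finset.Icc 1 a) a (fun n => (a:ℂ) * (x:ℂ)^n),
      if_pos (by simp [Finset.mem_Icc]; omega)]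
  rw [hsum]
  have hgeom : (∑ n ∈ Finset.Icc 1 a, (x:ℂ)^n) = (x:ℂ) * (((x:ℂ)^a - 1)/((x:ℂ) - 1)) := by
    rw [← geom_sum_eq hne1, Finset.mul_sum]
    have : Finset.Icc 1 a = Finset.map ⟨Nat.succ, Nat.succ_injective⟩ (Finset.range a) := by
      ext n
      simp only [Finset.mem_Icc, Finset.mem_map, Finset.mem_range, Function.Embedding.coeFn_mk]
      constructor
      · intro ⟨h1, h2⟩; exact ⟨n - 1, by omega, by omega⟩
      · rintro ⟨m, hm, rfl⟩; omega
    rw [this, Finset.sum_map]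
    exact Finset.sum_congr rfl fun i _ => by
      simp only [Function.Embedding.coeFn_mk, Nat.succ_eq_add_one, pow_succ]; ring
  rw [hgeom]
  have hx1' : (x:ℂ) - 1 ≠ 0 := sub_ne_zero_of_ne hne1
  field_simp
  ring

theorem stmt_12 (a : ℕ) (ha : 2 ≤ a) (s : ℂ) (hs : 1 < s.re) :
    (1 / Complex.Gamma s) *
      ∫ t in Set.Ioo (0:ℝ) 1,
        ((-Real.log t : ℝ) : ℂ) ^ (s - 1) *
          (∑ n ∈ Finset.Icc 1 a, (if a ∣ n then 1 - (a : ℂ) else 1) * (t : ℂ) ^ n) *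
          ((1 - (t : ℂ) ^ a) * t)⁻¹ =
    (1 - (a : ℂ) ^ (1 - s)) * riemannZeta s := by
  have ha0 : 0 < a := by omega
  have hane : (a:ℂ) ≠ 0 := Nat.cast_ne_zero.mpr (by omega)
  have hs0 : 0 < s.re := by linarith
  have hsne : s ≠ 0 := fun h => by simp [h] at hs0
  set A : ℕ → ℂ := fun n => if n = 0 then 0 else if a ∣ n then 1 - (a:ℂ) else 1 with hA
  set F : ℝ → ℂ := fun u =>
    (∑ n ∈ Finset.Icc 1 a, (if a ∣ n then 1 - (a:ℂ) else 1) * ((rexp (-u) : ℝ):ℂ)^n)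
      * (1 - ((rexp (-u) : ℝ):ℂ)^a)⁻¹ with hFdef
  -- Step 1: change of variables
  have hCoV : (∫ t in Set.Ioo (0:ℝ) 1,
        ((-Real.log t : ℝ) : ℂ) ^ (s - 1) *
          (∑ n ∈ Finset.Icc 1 a, (if a ∣ n then 1 - (a : ℂ) else 1) * (t : ℂ) ^ n) *
          ((1 - (t : ℂ) ^ a) * t)⁻¹) = mellin F s := by
    have himg : (fun u : ℝ => rexp (-u)) '' (Set.Ioi 0) = Set.Ioo 0 1 := by
      ext x
      constructor
      · rintro ⟨u, hu, rfl⟩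
        exact ⟨Real.exp_pos _, Real.exp_lt_one_iff.mpr (by simpa using (mem_Ioi.mp hu))⟩
      · rintro ⟨h0, h1⟩
        exact ⟨-Real.log x, by simpa using Real.log_neg h0 h1,
          by simp [Real.exp_log h0]⟩
    have hderiv : ∀ u ∈ Set.Ioi (0:ℝ),
        HasDerivWithinAt (fun u : ℝ => rexp (-u)) (-rexp (-u)) (Set.Ioi 0) u := by
      intro u _
      have h := (Real.hasDerivAt_exp (-u)).comp u (hasDerivAt_neg u)
      simpa [mul_comm, Function.comp_def] using h.hasDerivWithinAt
    have hinjOn : Set.InjOn (fun u : ℝ => rexp (-u)) (Set.Ioi 0) :=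
      (Real.exp_injective.comp neg_injective).injOn
    rw [← himg, integral_image_eq_integral_abs_deriv_smul measurableSet_Ioi hderiv hinjOn,
      mellin]
    refine setIntegral_congr_fun measurableSet_Ioi fun u hu => ?_
    have hxne : ((rexp (-u) : ℝ):ℂ) ≠ 0 := ofReal_ne_zero.mpr (Real.exp_pos _).ne'
    have hx1 : rexp (-u) < 1 := Real.exp_lt_one_iff.mpr (by simpa using (mem_Ioi.mp hu))
    have hxane : (1:ℂ) - ((rexp (-u) : ℝ):ℂ)^a ≠ 0 := by
      refine sub_ne_zero_of_ne fun h => ?_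
      have : ‖((rexp (-u) : ℝ):ℂ)^a‖ < 1 := by
        rw [norm_pow, Complex.norm_real, Real.norm_eq_abs, abs_of_pos (Real.exp_pos _)]
        exact pow_lt_one₀ (Real.exp_pos _).le hx1 ha0.ne'
      rw [← h] at this; simp at this
    rw [abs_neg, abs_of_pos (Real.exp_pos _), Real.log_exp, neg_neg,
      Complex.real_smul, smul_eq_mul, hFdef, mul_inv]
    have hc : ((rexp (-u) : ℝ):ℂ) * ((rexp (-u) : ℝ):ℂ)⁻¹ = 1 := mul_inv_cancel₀ hxne
    calc ((rexp (-u) : ℝ):ℂ) * ((u:ℂ) ^ (s-1) *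
          (∑ n ∈ Finset.Icc 1 a, (if a ∣ n then 1 - (a:ℂ) else 1) * ((rexp (-u) : ℝ):ℂ)^n) *
          ((1 - ((rexp (-u) : ℝ):ℂ)^a)⁻¹ * ((rexp (-u) : ℝ):ℂ)⁻¹))
        = (((rexp (-u) : ℝ):ℂ) * ((rexp (-u) : ℝ):ℂ)⁻¹) * ((u:ℂ) ^ (s-1) *
          ((∑ n ∈ Finset.Icc 1 a, (if a ∣ n then 1 - (a:ℂ) else 1) * ((rexp (-u) : ℝ):ℂ)^n) *
          (1 - ((rexp (-u) : ℝ):ℂ)^a)⁻¹)) := by ring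
      _ = _ := by rw [hc, one_mul]
  -- Step 2: Mellin = Dirichlet series
  have hp : ∀ n : ℕ, A n = 0 ∨ 0 < ((n:ℝ)) := by
    intro n
    rcases Nat.eq_zero_or_pos n with rfl | h
    · left; simp [hA]
    · right; exact_mod_cast h
  have hFsum : ∀ t ∈ Set.Ioi (0:ℝ),
      HasSum (fun n : ℕ => A n * ((rexp (-(n:ℝ) * t)):ℂ)) (F t) := by
    intro t ht
    have hx0 : 0 < rexp (-t) := Real.exp_pos _
    have hx1 : rexp (-t) < 1 := Real.exp_lt_one_iff.mpr (by simpa using (mem_Ioi.mp ht))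
    have h := stmt12_hasSum_aux a ha (rexp (-t)) hx0 hx1
    convert h using 2 with n
    rw [show -(n:ℝ) * t = (n:ℝ) * (-t) by ring, Real.exp_nat_mul]
    push_cast
    ring
  have hsummable : Summable (fun n : ℕ => ‖A n‖ / (n:ℝ) ^ s.re) := by
    have hb : Summable (fun n : ℕ => (a:ℝ) * (1 / (n:ℝ) ^ s.re)) :=
      (Real.summable_one_div_nat_rpow.mpr hs).mul_left _
    refine Summable.of_nonneg_of_le (fun n => by positivity) (fun n => ?_) hb
    rcases Nat.eq_zero_or_pos n with rfl | hn
    · simp [hA, Real.zero_rpow hs0.ne']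
    · have h2a : (2:ℝ) ≤ (a:ℝ) := by exact_mod_cast ha
      have hAn : ‖A n‖ ≤ (a:ℝ) := by
        simp only [hA, if_neg hn.ne']
        split_ifs with h
        · rw [show (1:ℂ) - (a:ℂ) = ((1 - (a:ℝ) : ℝ) : ℂ) by push_cast; ring,
            Complex.norm_real, Real.norm_eq_abs, abs_of_nonpos (by linarith)]
          linarith
        · rw [norm_one]; linarith
      rw [mul_one_div, div_eq_mul_inv, div_eq_mul_inv]
      exact mul_le_mul_of_nonneg_right hAn (by positivity)
  have hMel := hasSum_mellin (F := F) (a := A) (p := fun n : ℕ => (n:ℝ)) hp hs0 hFsum hsummable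
  -- Step 3: identify the Dirichlet series with zeta
  have hz : HasSum (fun n : ℕ => 1 / (n:ℂ) ^ s) (riemannZeta s) := by
    have hsm : Summable (fun n : ℕ => 1 / (n:ℂ) ^ s) := Complex.summable_one_div_nat_cpow.mpr hs
    exact (zeta_eq_tsum_one_div_nat_cpow hs) ▸ hsm.hasSum
  have hz2 : HasSum (fun n : ℕ => if a ∣ n then 1 / (n:ℂ)^s else 0)
      ((a:ℂ)^(-s) * riemannZeta s) := by
    have hinj : Function.Injective (fun k : ℕ => a * k) :=
      fun k l h => Nat.eq_of_mul_eq_mul_left ha0 h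
    rw [← hinj.hasSum_iff (fun n hn => by
      have hnd : ¬ a ∣ n := fun ⟨c, hc⟩ => hn ⟨c, hc.symm⟩
      simp [hnd])]
    have heq : (fun n : ℕ => if a ∣ n then 1 / (n:ℂ)^s else 0) ∘ (fun k : ℕ => a * k)
        = fun k : ℕ => (a:ℂ)^(-s) * (1 / (k:ℂ)^s) := by
      funext k
      simp only [Function.comp_apply, if_pos (Dvd.intro k rfl)]
      rcases Nat.eq_zero_or_pos k with rfl | hk
      · simp [Complex.zero_cpow hsne]
      · have h1 : ((a * k : ℕ):ℂ) = ((a:ℝ):ℂ) * ((k:ℝ):ℂ) := by push_cast; ring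
        rw [h1, Complex.mul_cpow_ofReal_nonneg (by positivity) (by positivity),
          Complex.cpow_neg]
        push_cast
        rw [one_div, mul_inv, one_div]
    rw [heq]
    exact hz.mul_left _
  have hcomb : HasSum (fun n : ℕ => Complex.Gamma s * A n / ((n:ℝ):ℂ) ^ s)
      (Complex.Gamma s * ((1 - (a:ℂ)^(1-s)) * riemannZeta s)) := by
    have H := (hz.sub (hz2.mul_left (a:ℂ))).mul_left (Complex.Gamma s)
    convert H using 1
    · rfl
    · funext n
      rw [Complex.ofReal_natCast]
      rcases Nat.eq_zero_or_pos n with rfl | hn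
      · simp [hA, Complex.zero_cpow hsne]
      · simp only [hA, if_neg hn.ne']
        split_ifs with hd <;> simp only [one_div, div_eq_mul_inv] <;> ring
    · rw [show (a:ℂ)^(1-s) = (a:ℂ) * (a:ℂ)^(-s) by
        rw [show (1:ℂ) - s = 1 + (-s) by ring, Complex.cpow_add _ _ hane, Complex.cpow_one]]
      ring
  rw [hCoV, hMel.unique hcomb, one_div,
    inv_mul_cancel_left₀ (Complex.Gamma_ne_zero_of_re_pos hs0)]
end

section
/- Let k ≥ 0 be a real number, let F : ℂ → ℂ be analytic on the open unit disc and on an open neighborhood of 1, with F(0) = 0 and Taylor coefficients a(n) at 0 satisfying |a(n)| ≤ C·n^k for all n ≥ 1, and let w ∈ (0,1). Then there exist a finite set S of positive integers and a function Λ_w : ℂ → ℂ analytic on ℂ ∖ S such that: (i) Λ_w(s) = (1/Γ(s)) · ∫_w^1 (−log t)^{s−1} · F(t) · t^{−1} dt for all s with Re s > k + 1; and (ii) for every natural number n, Λ_w(−n) = (D^n F)(1), where D is the operator (D f)(t) = t · f′(t). In particular the values of the analytic continuation at the negative integers are independent of w. -/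
open MeasureTheory Set Filter Complex Topology


lemma aux_mellin_eq {L : ℝ} (h : ℝ → ℂ) (s : ℂ) :
    mellin ((Ioo (0:ℝ) L).indicator h) s = ∫ u in Ioo (0:ℝ) L, (u:ℂ) ^ (s - 1) * h u := by
  rw [mellin]
  have : ∀ t : ℝ, (t:ℂ) ^ (s-1) • (Ioo (0:ℝ) L).indicator h t
      = (Ioo (0:ℝ) L).indicator (fun u : ℝ => (u:ℂ) ^ (s-1) * h u) t := by
    intro t
    by_cases ht : t ∈ Ioo (0:ℝ) L <;>
      simp [Set.indicator_of_mem, Set.indicator_of_notMem, ht, smul_eq_mul]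
  simp_rw [this]
  rw [setIntegral_indicator measurableSet_Ioo]
  congr 1
  rw [Set.inter_eq_self_of_subset_right]
  exact fun x hx => hx.1

lemma aux_mellin_diff {L : ℝ} (hL : 0 < L) {h : ℝ → ℂ}
    (hh : ContinuousOn h (Icc 0 L)) {s : ℂ} (hs : 0 < s.re) :
    DifferentiableAt ℂ (mellin ((Ioo (0:ℝ) L).indicator h)) s := by
  have hIoo : Ioo (0:ℝ) L ∈ 𝓝[>] (0:ℝ) := Ioo_mem_nhdsGT_of_mem ⟨le_refl _, hL⟩
  have hev : (Ioo (0:ℝ) L).indicator h =ᶠ[𝓝[>] (0:ℝ)] h :=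
    eventually_of_mem hIoo fun t ht => Set.indicator_of_mem ht h
  have hcw : ContinuousWithinAt h (Ioi 0) 0 := by
    refine ContinuousWithinAt.mono_of_mem_nhdsWithin (hh 0 ⟨le_refl _, hL.le⟩) ?_
    exact mem_of_superset hIoo Ioo_subset_Icc_self
  have htend : Tendsto ((Ioo (0:ℝ) L).indicator h) (𝓝[>] (0:ℝ)) (𝓝 (h 0)) :=
    hcw.tendsto.congr' hev.symm
  refine mellin_differentiableAt_of_isBigO_rpow (a := s.re + 1) (b := 0) ?_ ?_ (by linarith) ?_ hs
  · have hint : IntegrableOn h (Ioo (0:ℝ) L) := by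
      exact (hh.integrableOn_Icc).mono_set Ioo_subset_Icc_self
    exact (((integrable_indicator_iff measurableSet_Ioo).2
      hint).locallyIntegrable).locallyIntegrableOn _
  · have h0 : (Ioo (0:ℝ) L).indicator h =ᶠ[atTop] (fun _ => 0) := by
      filter_upwards [eventually_ge_atTop L] with t ht
      exact Set.indicator_of_notMem (fun hmem => absurd hmem.2 (not_lt.2 ht)) h
    calc (Ioo (0:ℝ) L).indicator h =O[atTop] (fun _ : ℝ => (0:ℂ)) := h0.isBigO
      _ =O[atTop] (· ^ (-(s.re+1))) := by
          apply Asymptotics.isBigO_zero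
  · have hO : (Ioo (0:ℝ) L).indicator h =O[𝓝[>] (0:ℝ)] (fun _ => (1:ℝ)) := htend.isBigO_one ℝ
    refine hO.congr' (EventuallyEq.refl _ _) ?_
    filter_upwards with t
    simp [Real.rpow_zero]


lemma aux_ibp {L : ℝ} (hL : 0 < L) {h h' : ℝ → ℂ}
    (hc : ContinuousOn h (Icc 0 L)) (hc' : ContinuousOn h' (Icc 0 L))
    (hd : ∀ u ∈ Icc (0:ℝ) L, HasDerivAt h (h' u) u) {σ : ℂ} (hσ : 0 < σ.re) :
    σ * (∫ u in Ioo (0:ℝ) L, (u:ℂ) ^ (σ - 1) * h u) + (∫ u in Ioo (0:ℝ) L, (u:ℂ) ^ σ * h' u)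
      = (L:ℂ) ^ σ * h L := by
  have hσ0 : σ ≠ 0 := fun hs => by simp [hs] at hσ
  have hio : ∀ (f : ℝ → ℂ), ∫ u in Ioo (0:ℝ) L, f u = ∫ u in (0:ℝ)..L, f u := by
    intro f
    rw [intervalIntegral.integral_of_le hL.le, integral_Ioc_eq_integral_Ioo]
  have hi1 : IntervalIntegrable (fun u : ℝ => σ * ((u:ℂ) ^ (σ-1) * h u)) volume 0 L := by
    apply IntervalIntegrable.const_mul
    apply IntervalIntegrable.mul_continuousOn
    · exact intervalIntegral.intervalIntegrable_cpow' (by simp [Complex.sub_re]; linarith)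
    · rwa [uIcc_of_le hL.le]
  have hi2 : IntervalIntegrable (fun u : ℝ => (u:ℂ) ^ σ * h' u) volume 0 L := by
    apply ContinuousOn.intervalIntegrable
    rw [uIcc_of_le hL.le]
    exact (Complex.continuous_ofReal_cpow_const hσ).continuousOn.mul hc'
  have hderiv : ∀ u ∈ Ioo (0:ℝ) L,
      HasDerivAt (fun u : ℝ => (u:ℂ) ^ σ * h u)
        (σ * ((u:ℂ) ^ (σ-1) * h u) + (u:ℂ) ^ σ * h' u) u := by
    intro u hu
    have h1 : HasDerivAt (fun u : ℝ => (u:ℂ) ^ σ) (σ * (u:ℂ) ^ (σ-1)) u := by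
      have hC : HasDerivAt (fun z : ℂ => z ^ σ) (σ * (u:ℂ) ^ (σ-1) * 1) (u:ℂ) :=
        HasDerivAt.cpow_const (hasDerivAt_id _) (by exact Complex.ofReal_mem_slitPlane.2 hu.1)
      simpa using hC.comp_ofReal
    have := h1.mul (hd u (Ioo_subset_Icc_self hu))
    exact this.congr_deriv (by ring)
  have hftc : ∫ u in (0:ℝ)..L, (σ * ((u:ℂ) ^ (σ-1) * h u) + (u:ℂ) ^ σ * h' u)
      = (L:ℂ) ^ σ * h L - (0:ℂ) ^ σ * h 0 := by
    have hcf : ContinuousOn (fun u : ℝ => (u:ℂ) ^ σ * h u) (Icc 0 L) :=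
      (Complex.continuous_ofReal_cpow_const hσ).continuousOn.mul hc
    have := intervalIntegral.integral_eq_sub_of_hasDerivAt_of_le hL.le hcf hderiv (hi1.add hi2)
    simpa using this
  rw [Complex.zero_cpow hσ0, zero_mul, sub_zero] at hftc
  rw [hio, hio, ← hftc, intervalIntegral.integral_add hi1 hi2,
    intervalIntegral.integral_const_mul]


lemma aux_core {g : ℂ → ℂ} {V : Set ℂ} (hV : IsOpen V) (hg : AnalyticOnNhd ℂ g V)
    {L : ℝ} (hL : 0 < L) (hsub : ∀ u : ℝ, u ∈ Icc (0:ℝ) L → (u:ℂ) ∈ V) :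
    ∃ Λ : ℂ → ℂ, (∀ s, AnalyticAt ℂ Λ s) ∧
      (∀ s, 0 < s.re →
        Λ s = (Complex.Gamma s)⁻¹ * ∫ u in Ioo (0:ℝ) L, (u:ℂ) ^ (s-1) * g u) ∧
      (∀ n : ℕ, Λ (-(n:ℂ)) = (-1)^n * iteratedDeriv n g 0) := by
  -- iterated derivatives of g are analytic on V
  have gA : ∀ j : ℕ, AnalyticOnNhd ℂ (iteratedDeriv j g) V := by
    intro j; induction j with
    | zero => simpa [iteratedDeriv_zero] using hg
    | succ n ih => rw [iteratedDeriv_succ]; exact ih.deriv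
  have hder : ∀ (j : ℕ) (z : ℂ), z ∈ V →
      HasDerivAt (iteratedDeriv j g) (iteratedDeriv (j+1) g z) z := by
    intro j z hz
    rw [iteratedDeriv_succ]
    exact ((gA j z hz).differentiableAt).hasDerivAt
  set gR : ℕ → ℝ → ℂ := fun j u => iteratedDeriv j g u with hgR
  have hRc : ∀ j : ℕ, ContinuousOn (gR j) (Icc 0 L) := by
    intro j u hu
    exact (((gA j _ (hsub u hu)).continuousAt).comp
      Complex.continuous_ofReal.continuousAt).continuousWithinAt
  have hRd : ∀ j : ℕ, ∀ u ∈ Icc (0:ℝ) L, HasDerivAt (gR j) (gR (j+1) u) u := by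
    intro j u hu
    exact (hder j _ (hsub u hu)).comp_ofReal
  set MN : ℕ → ℂ → ℂ := fun j => mellin ((Ioo (0:ℝ) L).indicator (gR j)) with hMN
  have hMint : ∀ (j : ℕ) (s : ℂ), MN j s = ∫ u in Ioo (0:ℝ) L, (u:ℂ) ^ (s-1) * gR j u :=
    fun j s => aux_mellin_eq (gR j) s
  set Λdef : ℕ → ℂ → ℂ := fun N s =>
      (∑ j ∈ Finset.range N,
        (-1)^j * (L:ℂ) ^ (s + j) * iteratedDeriv j g (L:ℂ) * (Complex.Gamma (s + j + 1))⁻¹)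
      + (-1)^N * (Complex.Gamma (s + N))⁻¹ * MN N (s + N) with hΛdef
  -- the step identity
  have hstep : ∀ (N : ℕ) (s : ℂ), -(N:ℝ) < s.re → Λdef (N+1) s = Λdef N s := by
    intro N s hs
    have hσ : 0 < (s + N).re := by
      simp only [Complex.add_re, Complex.natCast_re]; linarith
    have hσ0 : s + (N:ℂ) ≠ 0 := fun hh => by rw [hh] at hσ; simp at hσ
    have hΓne : Complex.Gamma (s + N) ≠ 0 := by
      apply Complex.Gamma_ne_zero
      intro m hm
      rw [hm] at hσ
      simp only [Complex.neg_re, Complex.natCast_re] at hσ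
      have : (0:ℝ) ≤ m := Nat.cast_nonneg m
      linarith
    have hibp := aux_ibp hL (hRc N) (hRc (N+1)) (hRd N) hσ
    have hA : MN N (s + N) = ∫ u in Ioo (0:ℝ) L, (u:ℂ) ^ (s + N - 1) * gR N u := hMint N _
    have hB : MN (N+1) (s + (N+1:ℕ)) = ∫ u in Ioo (0:ℝ) L, (u:ℂ) ^ (s + N) * gR (N+1) u := by
      rw [hMint (N+1) _]
      congr 1
      push_cast
      ring_nf
    have hΓ : Complex.Gamma (s + N + 1) = (s + N) * Complex.Gamma (s + N) :=
      Complex.Gamma_add_one _ hσ0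
    simp only [hΛdef, Finset.sum_range_succ]
    rw [hB, hA]
    have hgRL : gR N L = iteratedDeriv N g (L:ℂ) := rfl
    rw [← hgRL]
    have hcast : ((N+1:ℕ):ℂ) = (N:ℂ) + 1 := by push_cast; ring
    rw [hcast]
    have e1 : s + ((N:ℂ)+1) = s + N + 1 := by ring
    rw [e1, hΓ]
    set A := ∫ u in Ioo (0:ℝ) L, (u:ℂ) ^ (s + N - 1) * gR N u
    set B := ∫ u in Ioo (0:ℝ) L, (u:ℂ) ^ (s + N) * gR (N+1) u
    have hBA : B = (L:ℂ) ^ (s + N) * gR N L - (s + N) * A := by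
      rw [← hibp]; ring
    rw [hBA, hgRL]
    field_simp
    ring
  -- analyticity of each Λdef N on its half-plane
  have hΛA : ∀ (N : ℕ) (s : ℂ), -(N:ℝ) < s.re → AnalyticAt ℂ (Λdef N) s := by
    intro N s hs
    have hopen : IsOpen {z : ℂ | -(N:ℝ) < z.re} := isOpen_lt continuous_const Complex.continuous_re
    have hdiff : DifferentiableOn ℂ (Λdef N) {z : ℂ | -(N:ℝ) < z.re} := by
      apply DifferentiableOn.add
      · apply Differentiable.differentiableOn
        apply Differentiable.fun_sum
        intro j _
        apply Differentiable.mul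
        · apply Differentiable.mul
          · apply Differentiable.const_mul
            have : (fun z : ℂ => (L:ℂ) ^ (z + j)) =
                fun z : ℂ => Complex.exp (Complex.log (L:ℂ) * (z + j)) := by
              funext z
              exact Complex.cpow_def_of_ne_zero
                (by exact_mod_cast hL.ne' : (L:ℂ) ≠ 0) _
            rw [this]
            exact (((differentiable_id.add_const _).const_mul _)).cexp
          · exact differentiable_const _
        · have : (fun z : ℂ => (Complex.Gamma (z + j + 1))⁻¹) =
              (fun z : ℂ => (Complex.Gamma z)⁻¹) ∘ (fun z : ℂ => z + j + 1) := rfl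
          rw [this]
          exact Complex.differentiable_one_div_Gamma.comp
            ((differentiable_id.add_const _).add_const _)
      · intro z hz
        have hz' : (0:ℝ) < (z + N).re := by
          simp only [Complex.add_re, Complex.natCast_re]
          simp only [Set.mem_setOf_eq] at hz; linarith
        have h1 : DifferentiableAt ℂ (fun z : ℂ => MN N (z + N)) z := by
          have := aux_mellin_diff hL (hRc N) hz'
          exact DifferentiableAt.comp (f := fun z : ℂ => z + (N:ℂ)) z this (differentiableAt_id.add_const _)
        have h2 : DifferentiableAt ℂ (fun z : ℂ => (Complex.Gamma (z + N))⁻¹) z := by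
          have : (fun z : ℂ => (Complex.Gamma (z + N))⁻¹) =
              (fun z : ℂ => (Complex.Gamma z)⁻¹) ∘ (fun z : ℂ => z + N) := rfl
          rw [this]
          exact (Complex.differentiable_one_div_Gamma.comp
            (differentiable_id.add_const _)) z
        exact (((differentiableAt_const _).mul h2).mul h1).differentiableWithinAt
    exact hdiff.analyticAt (hopen.mem_nhds hs)
  -- agreement
  have hagree_le : ∀ (d N : ℕ) (s : ℂ), -(N:ℝ) < s.re → Λdef (N + d) s = Λdef N s := by
    intro d
    induction d with
    | zero => intro N s _; rfl
    | succ d ih =>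
      intro N s hs
      have h1 : -(((N + d : ℕ)):ℝ) < s.re := by
        push_cast
        have : (0:ℝ) ≤ d := Nat.cast_nonneg d
        linarith
      have := hstep (N + d) s h1
      calc Λdef (N + (d+1)) s = Λdef ((N + d) + 1) s := by ring_nf
        _ = Λdef (N + d) s := this
        _ = Λdef N s := ih N s hs
  have hagree : ∀ (M N : ℕ) (s : ℂ), -(M:ℝ) < s.re → -(N:ℝ) < s.re → Λdef M s = Λdef N s := by
    intro M N s hM hN
    rcases le_total M N with h | h
    · obtain ⟨d, rfl⟩ := Nat.exists_eq_add_of_le h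
      exact (hagree_le d M s hM).symm
    · obtain ⟨d, rfl⟩ := Nat.exists_eq_add_of_le h
      exact hagree_le d N s hN
  set Nfun : ℂ → ℕ := fun s => (⌊s.re⌋).natAbs + 1 with hNfdef
  have hNfun : ∀ s : ℂ, -((Nfun s : ℕ):ℝ) < s.re := by
    intro s
    have h1 : ((⌊s.re⌋:ℝ)) ≤ s.re := Int.floor_le _
    have h2 : -|(⌊s.re⌋:ℝ)| ≤ (⌊s.re⌋:ℝ) := neg_abs_le _
    have h3 : ((((⌊s.re⌋).natAbs : ℕ)):ℝ) = |(⌊s.re⌋:ℝ)| := by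
      rw [← Int.cast_natCast, Int.natCast_natAbs, Int.cast_abs]
    simp only [hNfdef]
    push_cast
    rw [h3]
    linarith
  refine ⟨fun s => Λdef (Nfun s) s, ?_, ?_, ?_⟩
  · intro s₀
    have hev : Λdef (Nfun s₀) =ᶠ[𝓝 s₀] fun s => Λdef (Nfun s) s := by
      have hopen : IsOpen {z : ℂ | -((Nfun s₀:ℕ):ℝ) < z.re} :=
        isOpen_lt continuous_const Complex.continuous_re
      filter_upwards [hopen.mem_nhds (hNfun s₀)] with s hs
      exact hagree (Nfun s₀) (Nfun s) s hs (hNfun s)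
    exact (hΛA (Nfun s₀) s₀ (hNfun s₀)).congr hev
  · intro s hs
    have h0 : -((0:ℕ):ℝ) < s.re := by simpa using hs
    show Λdef (Nfun s) s = _
    rw [hagree (Nfun s) 0 s (hNfun s) h0]
    simp only [hΛdef, Finset.range_zero, Finset.sum_empty, pow_zero, Nat.cast_zero, add_zero,
      zero_add, one_mul]
    rw [hMint 0 s]
    have heq : (∫ u in Ioo (0:ℝ) L, (u:ℂ) ^ (s-1) * gR 0 u)
        = ∫ u in Ioo (0:ℝ) L, (u:ℂ) ^ (s-1) * g u := by
      apply setIntegral_congr_fun measurableSet_Ioo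
      intro u _
      simp [hgR, iteratedDeriv_zero]
    rw [heq]
  · intro n
    have hlt : -(((n+1:ℕ)):ℝ) < (-(n:ℂ)).re := by
      simp only [Complex.neg_re, Complex.natCast_re]
      push_cast
      linarith
    show Λdef (Nfun (-(n:ℂ))) (-(n:ℂ)) = _
    rw [hagree (Nfun (-(n:ℂ))) (n+1) _ (hNfun _) hlt]
    simp only [hΛdef, Finset.sum_range_succ]
    have hsum0 : (∑ j ∈ Finset.range n,
        (-1)^j * (L:ℂ) ^ (-(n:ℂ) + j) * iteratedDeriv j g (L:ℂ)
          * (Complex.Gamma (-(n:ℂ) + j + 1))⁻¹) = 0 := by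
      apply Finset.sum_eq_zero
      intro j hj
      have hjn : j < n := Finset.mem_range.mp hj
      have : -(n:ℂ) + j + 1 = -((n - j - 1 : ℕ):ℂ) := by
        have h2 : j ≤ n := hjn.le
        have h1 : 1 ≤ n - j := by omega
        push_cast [Nat.cast_sub h2, Nat.cast_sub h1]
        ring
      rw [this, Complex.Gamma_neg_nat_eq_zero, inv_zero, mul_zero]
    rw [hsum0, zero_add]
    have hnn : -(n:ℂ) + n = 0 := by ring
    have hone : -(n:ℂ) + ((n+1:ℕ):ℂ) = 1 := by push_cast; ring
    rw [hnn, hone]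
    rw [Complex.cpow_zero, Complex.Gamma_one, inv_one, mul_one, mul_one]
    rw [zero_add, Complex.Gamma_one, inv_one, mul_one]
    have hMN1 : MN (n+1) 1 = ∫ u in Ioo (0:ℝ) L, gR (n+1) u := by
      rw [hMint (n+1) 1]
      apply setIntegral_congr_fun measurableSet_Ioo
      intro u _
      simp
    have hFTC : ∫ u in Ioo (0:ℝ) L, gR (n+1) u = gR n L - gR n 0 := by
      rw [← integral_Ioc_eq_integral_Ioo, ← intervalIntegral.integral_of_le hL.le]
      apply intervalIntegral.integral_eq_sub_of_hasDerivAt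
      · intro u hu
        rw [uIcc_of_le hL.le] at hu
        exact hRd n u hu
      · apply ContinuousOn.intervalIntegrable
        rw [uIcc_of_le hL.le]
        exact hRc (n+1)
    rw [hMN1, hFTC]
    have hg0 : gR n 0 = iteratedDeriv n g 0 := by simp [hgR]
    have hgL : gR n L = iteratedDeriv n g (L:ℂ) := rfl
    rw [hg0, hgL, pow_succ]
    ring


theorem stmt_14 (k : ℝ) (hk : 0 ≤ k) (F : ℂ → ℂ)
    (hF_disc : ∀ z ∈ Metric.ball (0 : ℂ) 1, AnalyticAt ℂ F z)
    (hF_one : AnalyticAt ℂ F 1) (hF0 : F 0 = 0)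
    (C : ℝ) (hC : 0 < C)
    (ha : ∀ n : ℕ, 1 ≤ n → ‖iteratedDeriv n F 0 / (n.factorial : ℂ)‖ ≤ C * (n : ℝ) ^ k)
    (w : ℝ) (hw : w ∈ Set.Ioo (0:ℝ) 1) :
    ∃ S : Finset ℕ, (∀ m ∈ S, 1 ≤ m) ∧
      ∃ Λ : ℂ → ℂ,
        (∀ s : ℂ, (∀ m ∈ S, s ≠ (m : ℂ)) → AnalyticAt ℂ Λ s) ∧
        (∀ s : ℂ, k + 1 < s.re →
          Λ s = (1 / Complex.Gamma s) *
            ∫ t in Set.Ioo w 1,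
              ((-Real.log t : ℝ) : ℂ) ^ (s - 1) * F (t : ℂ) * (t : ℂ)⁻¹) ∧
        (∀ n : ℕ, Λ (-(n : ℂ)) = ((fun f : ℂ → ℂ => fun t => t * deriv f t)^[n] F) 1) := by
  obtain ⟨hw0, hw1⟩ := hw
  -- the open set where F is analytic
  set W : Set ℂ := {z | AnalyticAt ℂ F z} with hWdef
  have hWo : IsOpen W := isOpen_analyticAt ℂ F
  have hW : AnalyticOnNhd ℂ F W := fun z hz => hz
  have hball : Metric.ball (0:ℂ) 1 ⊆ W := hF_disc
  have h1W : (1:ℂ) ∈ W := hF_one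
  -- the operator D and its iterates
  set Dop : (ℂ → ℂ) → (ℂ → ℂ) := fun f t => t * deriv f t with hDop
  have hDnA : ∀ n : ℕ, AnalyticOnNhd ℂ (Dop^[n] F) W := by
    intro n
    induction n with
    | zero => simpa using hW
    | succ m ih =>
      rw [Function.iterate_succ_apply']
      exact analyticOnNhd_id.mul ih.deriv
  -- the function g(z) = F(exp(-z))
  set E : ℂ → ℂ := fun z => Complex.exp (-z) with hEdef
  have hEdiff : Differentiable ℂ E := Complex.differentiable_exp.comp differentiable_id.neg
  set g : ℂ → ℂ := fun z => F (E z) with hgdef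
  set V : Set ℂ := E ⁻¹' W with hVdef
  have hVo : IsOpen V := hWo.preimage hEdiff.continuous
  have hgA : AnalyticOnNhd ℂ g V := by
    apply DifferentiableOn.analyticOnNhd _ hVo
    intro z hz
    exact ((hW (E z) hz).differentiableAt.comp z (hEdiff z)).differentiableWithinAt
  set L : ℝ := -Real.log w with hLdef
  have hL : 0 < L := by
    have := Real.log_neg hw0 hw1
    simp only [hLdef]; linarith
  have hexp_mem : ∀ u : ℝ, u ∈ Icc (0:ℝ) L → ((Real.exp (-u) : ℝ) : ℂ) ∈ W := by
    intro u hu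
    rcases eq_or_lt_of_le hu.1 with h0 | h0
    · have : Real.exp (-u) = 1 := by rw [← h0]; simp
      rw [this]; exact_mod_cast h1W
    · apply hball
      rw [Metric.mem_ball, dist_zero_right]
      have h1 : Real.exp (-u) < 1 := Real.exp_lt_one_iff.mpr (by linarith)
      have h2 : (0:ℝ) < Real.exp (-u) := Real.exp_pos _
      rw [Complex.norm_real, Real.norm_eq_abs, abs_of_pos h2]
      exact h1
  have hEreal : ∀ u : ℝ, E (u:ℂ) = ((Real.exp (-u) : ℝ) : ℂ) := by
    intro u
    show Complex.exp (-(u:ℂ)) = _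
    rw [Complex.ofReal_exp, Complex.ofReal_neg]
  have hsub : ∀ u : ℝ, u ∈ Icc (0:ℝ) L → (u:ℂ) ∈ V := by
    intro u hu
    show E (u:ℂ) ∈ W
    rw [hEreal u]
    exact hexp_mem u hu
  -- chain rule relation
  have hrel : ∀ n : ℕ, ∀ z ∈ V, iteratedDeriv n g z = (-1)^n * (Dop^[n] F) (E z) := by
    intro n
    induction n with
    | zero => intro z hz; simp [iteratedDeriv_zero, hgdef]
    | succ m ih =>
      intro z hz
      rw [iteratedDeriv_succ]
      have hev : iteratedDeriv m g =ᶠ[𝓝 z] fun z' => (-1)^m * (Dop^[m] F) (E z') :=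
        eventually_of_mem (hVo.mem_nhds hz) ih
      rw [hev.deriv_eq]
      have htW : E z ∈ W := hz
      have hd1 : HasDerivAt (Dop^[m] F) (deriv (Dop^[m] F) (E z)) (E z) :=
        ((hDnA m) (E z) htW).differentiableAt.hasDerivAt
      have hd2 : HasDerivAt E (-(E z)) z := by
        have := (Complex.hasDerivAt_exp (-z)).comp z ((hasDerivAt_id z).neg)
        simpa [hEdef, Function.comp_def] using this
      have hd3 : HasDerivAt (fun z' => (-1)^m * (Dop^[m] F) (E z'))
          ((-1)^m * (deriv (Dop^[m] F) (E z) * (-(E z)))) z :=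
        ((hd1.comp z hd2)).const_mul _
      rw [hd3.deriv]
      rw [Function.iterate_succ_apply']
      show (-1)^m * (deriv (Dop^[m] F) (E z) * -E z) = (-1)^(m+1) * (E z * deriv (Dop^[m] F) (E z))
      rw [pow_succ]
      ring
  -- apply the core lemma
  obtain ⟨Λ, hA, hform, hval⟩ := aux_core hVo hgA hL hsub
  refine ⟨∅, by simp, Λ, fun s _ => hA s, ?_, ?_⟩
  · -- the integral formula
    intro s hs
    have hs0 : 0 < s.re := by linarith
    rw [hform s hs0, one_div]
    congr 1
    -- change of variables t = exp(-u)
    have himg : (fun u : ℝ => Real.exp (-u)) '' Ioo 0 L = Ioo w 1 := by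
      ext t
      constructor
      · rintro ⟨u, hu, rfl⟩
        constructor
        · have : Real.exp (-L) < Real.exp (-u) := Real.exp_lt_exp.mpr (by linarith [hu.2])
          have hL' : Real.exp (-L) = w := by
            rw [hLdef, neg_neg, Real.exp_log hw0]
          linarith [this, hL'.symm.le]
        · exact Real.exp_lt_one_iff.mpr (by linarith [hu.1])
      · intro ht
        refine ⟨-Real.log t, ⟨?_, ?_⟩, ?_⟩
        · have : Real.log t < 0 := Real.log_neg (lt_trans hw0 ht.1) ht.2
          linarith
        · have : Real.log w < Real.log t := Real.log_lt_log hw0 ht.1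
          simp only [hLdef]; linarith
        · show Real.exp (-(-Real.log t)) = t
          rw [neg_neg, Real.exp_log (lt_trans hw0 ht.1)]
    have hderiv : ∀ x ∈ Ioo (0:ℝ) L,
        HasDerivWithinAt (fun u : ℝ => Real.exp (-u)) (-Real.exp (-x)) (Ioo (0:ℝ) L) x := by
      intro x _
      have := (Real.hasDerivAt_exp (-x)).comp x ((hasDerivAt_id x).neg)
      simpa [Function.comp_def] using this.hasDerivWithinAt
    have hinj : InjOn (fun u : ℝ => Real.exp (-u)) (Ioo 0 L) := by
      intro a _ b _ hab
      have := Real.exp_injective hab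
      linarith [neg_injective this]
    have hcov := integral_image_eq_integral_abs_deriv_smul measurableSet_Ioo hderiv hinj
      (fun t : ℝ => ((-Real.log t : ℝ) : ℂ) ^ (s - 1) * F (t : ℂ) * (t : ℂ)⁻¹)
    rw [himg] at hcov
    rw [hcov]
    apply setIntegral_congr_fun measurableSet_Ioo
    intro u _
    have h1 : Real.log (Real.exp (-u)) = -u := Real.log_exp _
    have hexppos : (0:ℝ) < Real.exp (-u) := Real.exp_pos _
    have hne : ((Real.exp (-u) : ℝ) : ℂ) ≠ 0 := by
      exact_mod_cast ne_of_gt hexppos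
    show (u:ℂ) ^ (s-1) * g (u:ℂ)
        = |(-Real.exp (-u))| • (((-Real.log (Real.exp (-u)) : ℝ) : ℂ) ^ (s - 1)
            * F ((Real.exp (-u) : ℝ) : ℂ) * (((Real.exp (-u) : ℝ) : ℂ))⁻¹)
    rw [abs_neg, abs_of_pos hexppos, Complex.real_smul, h1, neg_neg]
    rw [show F ((Real.exp (-u) : ℝ) : ℂ) = g (u:ℂ) by
      show _ = F (E (u:ℂ)); rw [hEreal u]]
    field_simp
  · -- values at negative integers
    intro n
    rw [hval n]
    have h0V : ((0:ℝ):ℂ) ∈ V := hsub 0 ⟨le_refl _, hL.le⟩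
    have h0V' : (0:ℂ) ∈ V := by simpa using h0V
    have := hrel n 0 h0V'
    rw [this]
    have hE0 : E 0 = 1 := by simp [hEdef]
    rw [hE0]
    show (-1)^n * ((-1)^n * (Dop^[n] F) 1) = (Dop^[n] F) 1
    rw [← mul_assoc, ← mul_pow]
    norm_num
end

section
/- For every s ∈ ℂ with Re s > 2: (1/Γ(s)) · ∫_0^1 (−log z)^{s−1} · (Σ_{n≥1} μ(n) z^n) · z^{−1} dz = 1/ζ(s), where μ is the Möbius function and ζ is the Riemann zeta function (which is nonzero for Re s > 1). -/
open MeasureTheory Real Set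

noncomputable def Fmu : ℝ → ℂ := fun t => ∑' n : ℕ, (ArithmeticFunction.moebius n : ℂ) * rexp (-(n : ℝ) * t)

lemma Fmu_hasSum {t : ℝ} (ht : 0 < t) :
    HasSum (fun n : ℕ => (ArithmeticFunction.moebius n : ℂ) * rexp (-(n : ℝ) * t)) (Fmu t) := by
  refine Summable.hasSum ?_
  apply Summable.of_norm_bounded (g := fun n : ℕ => rexp (-t) ^ n)
  · exact summable_geometric_of_lt_one (exp_nonneg _) (exp_lt_one_iff.mpr (by linarith))
  · intro n
    rw [norm_mul]
    have h1 : ‖((ArithmeticFunction.moebius n : ℤ) : ℂ)‖ ≤ 1 := by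
      rw [Complex.norm_intCast]
      exact_mod_cast ArithmeticFunction.abs_moebius_le_one
    have h2 : ‖(rexp (-(n : ℝ) * t) : ℂ)‖ = rexp (-t) ^ n := by
      rw [Complex.norm_real, Real.norm_eq_abs, abs_exp, ← Real.exp_nat_mul]
      ring_nf
    rw [h2]
    nlinarith [norm_nonneg ((rexp (-(n:ℝ)*t) : ℂ)), pow_nonneg (exp_nonneg (-t)) n, h1]

lemma mellin_Fmu (s : ℂ) (hs : 2 < s.re) :
    mellin Fmu s = Complex.Gamma s * (riemannZeta s)⁻¹ := by
  have hs0 : 0 < s.re := by linarith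
  have key := hasSum_mellin (a := fun n : ℕ => (ArithmeticFunction.moebius n : ℂ))
      (p := fun n : ℕ => (n : ℝ)) (F := Fmu) (s := s) ?_ hs0 ?_ ?_
  · have h1 : riemannZeta s * LSeries (fun n => ((ArithmeticFunction.moebius n : ℤ) : ℂ)) s = 1 := by
      rw [← LSeries_one_eq_riemannZeta (by linarith : 1 < s.re)]
      exact LSeries_one_mul_Lseries_moebius (by linarith)
    have h2 : LSeries (fun n => ((ArithmeticFunction.moebius n : ℤ) : ℂ)) s = (riemannZeta s)⁻¹ :=
      (inv_eq_of_mul_eq_one_right h1).symm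
    rw [← h2, ← key.tsum_eq, LSeries]
    rw [← tsum_mul_left (a := Complex.Gamma s)]
    congr 1
    funext n
    rcases Nat.eq_zero_or_pos n with rfl | hn
    · simp [LSeries.term]
    · rw [LSeries.term_of_ne_zero hn.ne', mul_div_assoc]
      norm_cast
  · intro n
    rcases Nat.eq_zero_or_pos n with rfl | hn
    · exact Or.inl (by simp)
    · exact Or.inr (by positivity)
  
  · intro t ht
    exact Fmu_hasSum ht
  · refine Summable.of_nonneg_of_le (fun n => by positivity) (fun n => ?_)
      (?_ : Summable fun n : ℕ => ((n : ℝ) ^ s.re)⁻¹)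
    · 
      rw [div_eq_mul_inv]
      have h1 : ‖((ArithmeticFunction.moebius n : ℤ) : ℂ)‖ ≤ 1 := by
        rw [Complex.norm_intCast]
        exact_mod_cast ArithmeticFunction.abs_moebius_le_one
      have : (0:ℝ) ≤ ((n : ℝ) ^ s.re)⁻¹ := by positivity
      nlinarith [norm_nonneg ((ArithmeticFunction.moebius n : ℤ) : ℂ)]
    · rw [Real.summable_nat_rpow_inv]
      linarith

theorem stmt_16 (s : ℂ) (hs : 2 < s.re) :
    (1 / Complex.Gamma s) *
      ∫ z in Set.Ioo (0:ℝ) 1,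
        ((-Real.log z : ℝ) : ℂ) ^ (s - 1) *
          (∑' n : ℕ, (ArithmeticFunction.moebius n : ℂ) * (z : ℂ) ^ n) * (z : ℂ)⁻¹ =
    (riemannZeta s)⁻¹ := by
  have himg : (fun t : ℝ => rexp (-t)) '' Ioi 0 = Ioo (0:ℝ) 1 := by
    ext x
    constructor
    · rintro ⟨t, ht, rfl⟩
      exact ⟨exp_pos _, exp_lt_one_iff.mpr (by simpa using ht)⟩
    · rintro ⟨hx0, hx1⟩
      exact ⟨-Real.log x, by simpa using Real.log_neg hx0 hx1, by simp [Real.exp_log hx0]⟩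
  have hsub := integral_image_eq_integral_abs_deriv_smul (s := Ioi 0)
      (f := fun t : ℝ => rexp (-t)) (f' := fun t : ℝ => -rexp (-t)) measurableSet_Ioi
      (fun x _ => ((Real.hasDerivAt_exp (-x)).comp x (hasDerivAt_neg x)).hasDerivWithinAt.congr_deriv (by ring))
      (fun a _ b _ hab => by
        have := Real.exp_injective hab; linarith)
      (fun z : ℝ => ((-Real.log z : ℝ) : ℂ) ^ (s - 1) *
          (∑' n : ℕ, (ArithmeticFunction.moebius n : ℂ) * (z : ℂ) ^ n) * (z : ℂ)⁻¹)
  rw [himg] at hsub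
  have heq : ∫ t in Ioi (0:ℝ), |-rexp (-t)| •
      (((-Real.log (rexp (-t)) : ℝ) : ℂ) ^ (s - 1) *
        (∑' n : ℕ, (ArithmeticFunction.moebius n : ℂ) * ((rexp (-t) : ℝ) : ℂ) ^ n) *
        ((rexp (-t) : ℝ) : ℂ)⁻¹) = mellin Fmu s := by
    rw [mellin]
    refine setIntegral_congr_fun measurableSet_Ioi (fun t ht => ?_)
    have ht' : (0:ℝ) < t := ht
    have hE : ((rexp (-t) : ℝ) : ℂ) ≠ 0 := by
      exact_mod_cast (exp_pos (-t)).ne'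
    have hsum : (∑' n : ℕ, (ArithmeticFunction.moebius n : ℂ) * ((rexp (-t) : ℝ) : ℂ) ^ n) = Fmu t := by
      rw [← (Fmu_hasSum ht').tsum_eq]
      congr 1
      funext n
      congr 1
      rw [← Complex.ofReal_pow, ← Real.exp_nat_mul]
      ring_nf
    rw [hsum, Real.log_exp, abs_neg, abs_exp, neg_neg]
    rw [Complex.real_smul, smul_eq_mul]
    field_simp
  rw [hsub, heq, mellin_Fmu s hs]
  have hG : Complex.Gamma s ≠ 0 := Complex.Gamma_ne_zero_of_re_pos (by linarith)
  field_simp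
end
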